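/- arXiv:2011.05562 — 8 statements merged into one kernel-verified Lean document; each statement's English description precedes it below -/
import Mathlib

section
/- Let d₁, d₂ be positive integers, A a d₁×d₁ real symmetric matrix, D a d₂×d₂ real symmetric matrix, and Z an arbitrary d₁×d₂ real matrix. Let J be the (d₁+d₂)×(d₁+d₂) block matrix J = [[A, Z], [−Zᵀ, D]]. Set λ⁻ = min(λmin(A), λmin(D)) and λ⁺ = max(λmax(A), λmax(D)). Then every real eigenvalue μ of J satisfies λ⁻ ≤ μ ≤ λ⁺. -/
open Matrix

/-- Smallest eigenvalue of a Hermitian (real symmetric) matrix. -/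
noncomputable def lamMin {n : Type*} [Fintype n] [DecidableEq n] {A : Matrix n n ℝ}
    (hA : A.IsHermitian) : ℝ := ⨅ i, hA.eigenvalues i

/-- Largest eigenvalue of a Hermitian (real symmetric) matrix. -/
noncomputable def lamMax {n : Type*} [Fintype n] [DecidableEq n] {A : Matrix n n ℝ}
    (hA : A.IsHermitian) : ℝ := ⨆ i, hA.eigenvalues i

lemma star_mulVec_dot {n : Type*} [Fintype n] (U : Matrix n n ℝ) (x w : n → ℝ) :
    (star U *ᵥ x) ⬝ᵥ w = x ⬝ᵥ (U *ᵥ w) := by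
  rw [star_eq_conjTranspose, conjTranspose_eq_transpose_of_trivial, mulVec_transpose,
    dotProduct_mulVec]

lemma rayleigh {n : Type*} [Fintype n] [DecidableEq n] [Nonempty n]
    {A : Matrix n n ℝ} (hA : A.IsHermitian) (x : n → ℝ) :
    lamMin hA * (x ⬝ᵥ x) ≤ x ⬝ᵥ (A *ᵥ x) ∧ x ⬝ᵥ (A *ᵥ x) ≤ lamMax hA * (x ⬝ᵥ x) := by
  set U : Matrix n n ℝ := (hA.eigenvectorUnitary : Matrix n n ℝ) with hU
  set y : n → ℝ := star U *ᵥ x with hy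
  have hyy : x ⬝ᵥ x = y ⬝ᵥ y := by
    rw [hy, star_mulVec_dot, mulVec_mulVec, (Matrix.mem_unitaryGroup_iff).mp
      (hA.eigenvectorUnitary).2, one_mulVec]
  have hAx : x ⬝ᵥ (A *ᵥ x) = ∑ i, hA.eigenvalues i * (y i)^2 := by
    conv_lhs => rw [hA.spectral_theorem, Unitary.conjStarAlgAut_apply]
    rw [← mulVec_mulVec, ← mulVec_mulVec, ← star_mulVec_dot U x, ← hy]
    simp only [dotProduct, mulVec_diagonal, Function.comp, RCLike.ofReal_real_eq_id, id_eq, sq]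
    exact Finset.sum_congr rfl fun i _ => by ring
  have hbound := fun i => sq_nonneg (y i)
  have hmin : ∀ i, lamMin hA ≤ hA.eigenvalues i := fun i =>
    ciInf_le (Set.Finite.bddBelow (Set.finite_range _)) i
  have hmax : ∀ i, hA.eigenvalues i ≤ lamMax hA := fun i =>
    le_ciSup (Set.Finite.bddAbove (Set.finite_range _)) i
  constructor
  · rw [hAx, hyy]
    have : y ⬝ᵥ y = ∑ i, (y i)^2 := by simp [dotProduct, sq]
    rw [this, Finset.mul_sum]
    exact Finset.sum_le_sum fun i _ => mul_le_mul_of_nonneg_right (hmin i) (sq_nonneg _)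
  · rw [hAx, hyy]
    have : y ⬝ᵥ y = ∑ i, (y i)^2 := by simp [dotProduct, sq]
    rw [this, Finset.mul_sum]
    exact Finset.sum_le_sum fun i _ => mul_le_mul_of_nonneg_right (hmax i) (sq_nonneg _)

lemma complex_re_quad {n : Type*} [Fintype n] (A : Matrix n n ℝ) (x : n → ℂ) :
    (star x ⬝ᵥ ((A.map (algebraMap ℝ ℂ)) *ᵥ x)).re =
      (fun i => (x i).re) ⬝ᵥ (A *ᵥ fun i => (x i).re) +
      (fun i => (x i).im) ⬝ᵥ (A *ᵥ fun i => (x i).im) := by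
  simp only [dotProduct, mulVec, map_apply, Pi.star_apply, Finset.mul_sum, Complex.re_sum,
    ← Finset.sum_add_distrib]
  refine Finset.sum_congr rfl fun i _ => Finset.sum_congr rfl fun j _ => ?_
  simp only [RCLike.star_def, Complex.mul_re, Complex.mul_im, Complex.conj_re, Complex.conj_im]
  simp only [Complex.coe_algebraMap, Complex.ofReal_re, Complex.ofReal_im]
  ring

lemma complex_rayleigh {n : Type*} [Fintype n] [DecidableEq n] [Nonempty n]
    {A : Matrix n n ℝ} (hA : A.IsHermitian) (x : n → ℂ) :
    lamMin hA * (∑ i, Complex.normSq (x i)) ≤ (star x ⬝ᵥ ((A.map (algebraMap ℝ ℂ)) *ᵥ x)).re ∧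
    (star x ⬝ᵥ ((A.map (algebraMap ℝ ℂ)) *ᵥ x)).re ≤ lamMax hA * (∑ i, Complex.normSq (x i)) := by
  rw [complex_re_quad]
  have hs : (∑ i, Complex.normSq (x i)) =
      (fun i => (x i).re) ⬝ᵥ (fun i => (x i).re) + (fun i => (x i).im) ⬝ᵥ (fun i => (x i).im) := by
    simp [dotProduct, Complex.normSq_apply, Finset.sum_add_distrib]
  rw [hs]
  have h1 := rayleigh hA (fun i => (x i).re)
  have h2 := rayleigh hA (fun i => (x i).im)
  constructor
  · rw [mul_add]; exact add_le_add h1.1 h2.1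
  · rw [mul_add]; exact add_le_add h1.2 h2.2

lemma conj_cross {d₁ d₂ : Type*} [Fintype d₁] [Fintype d₂] (Z : Matrix d₁ d₂ ℝ)
    (x : d₁ → ℂ) (y : d₂ → ℂ) :
    star y ⬝ᵥ ((Zᵀ.map (algebraMap ℝ ℂ)) *ᵥ x) =
      (starRingEnd ℂ) (star x ⬝ᵥ ((Z.map (algebraMap ℝ ℂ)) *ᵥ y)) := by
  simp only [dotProduct, mulVec, map_apply, transpose_apply, map_sum, _root_.map_mul,
    Pi.star_apply, RCLike.star_def, Complex.conj_conj, Complex.coe_algebraMap,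
    Complex.conj_ofReal, Finset.mul_sum]
  rw [Finset.sum_comm]
  exact Finset.sum_congr rfl fun i _ => Finset.sum_congr rfl fun j _ => by ring

theorem stmt0 {d₁ d₂ : ℕ} (hd₁ : 0 < d₁) (hd₂ : 0 < d₂)
    (A : Matrix (Fin d₁) (Fin d₁) ℝ) (D : Matrix (Fin d₂) (Fin d₂) ℝ)
    (Z : Matrix (Fin d₁) (Fin d₂) ℝ)
    (hA : A.IsHermitian) (hD : D.IsHermitian)
    (μ : ℝ)
    (hμ : (μ : ℂ) ∈ spectrum ℂ ((Matrix.fromBlocks A Z (-Zᵀ) D).map (algebraMap ℝ ℂ))) :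
    min (lamMin hA) (lamMin hD) ≤ μ ∧ μ ≤ max (lamMax hA) (lamMax hD) := by
  haveI : Nonempty (Fin d₁) := Fin.pos_iff_nonempty.mp hd₁
  haveI : Nonempty (Fin d₂) := Fin.pos_iff_nonempty.mp hd₂
  set f := algebraMap ℝ ℂ
  set M' := (Matrix.fromBlocks A Z (-Zᵀ) D).map f with hM'
  -- extract eigenvector
  rw [spectrum.mem_iff] at hμ
  rw [Matrix.isUnit_iff_isUnit_det, isUnit_iff_ne_zero, not_not] at hμ
  obtain ⟨v, hv0, hv⟩ := (Matrix.exists_mulVec_eq_zero_iff).mpr hμ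
  have hMv : M' *ᵥ v = (μ : ℂ) • v := by
    have := hv
    rw [Matrix.sub_mulVec] at this
    have h1 : (algebraMap ℂ (Matrix (Fin d₁ ⊕ Fin d₂) (Fin d₁ ⊕ Fin d₂) ℂ)) (μ:ℂ) *ᵥ v
        = (μ:ℂ) • v := by
      rw [Algebra.algebraMap_eq_smul_one, smul_mulVec, one_mulVec]
    rw [h1] at this
    exact (sub_eq_zero.mp this).symm
  -- split v
  set x : Fin d₁ → ℂ := v ∘ Sum.inl with hx
  set y : Fin d₂ → ℂ := v ∘ Sum.inr with hyd
  have hvelim : v = Sum.elim x y := by funext i; cases i <;> rfl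
  have hstar : star v = Sum.elim (star x) (star y) := by funext i; cases i <;> rfl
  set Sx := ∑ i, Complex.normSq (x i) with hSx
  set Sy := ∑ i, Complex.normSq (y i) with hSy
  have hSxnn : 0 ≤ Sx := Finset.sum_nonneg fun i _ => Complex.normSq_nonneg _
  have hSynn : 0 ≤ Sy := Finset.sum_nonneg fun i _ => Complex.normSq_nonneg _
  have hS : (∑ i, Complex.normSq (v i)) = Sx + Sy := by
    rw [Fintype.sum_sum_type]; rfl
  have hSpos : 0 < Sx + Sy := by
    rw [← hS]
    obtain ⟨i, hi⟩ := Function.ne_iff.mp hv0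
    have h1 : 0 < Complex.normSq (v i) := Complex.normSq_pos.mpr hi
    calc 0 < Complex.normSq (v i) := h1
      _ ≤ _ := Finset.single_le_sum (fun j _ => Complex.normSq_nonneg _) (Finset.mem_univ i)
  -- compute Re of quadratic form: eigen side
  have hlhs : (star v ⬝ᵥ (M' *ᵥ v)).re = μ * (Sx + Sy) := by
    rw [hMv, dotProduct_smul, ← hS]
    have : (star v ⬝ᵥ v).re = ∑ i, Complex.normSq (v i) := by
      simp [dotProduct, Complex.re_sum, Complex.normSq_apply, Complex.mul_re]
    rw [smul_eq_mul, Complex.mul_re, this]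
    simp
  -- compute Re of quadratic form: block side
  have hrhs : (star v ⬝ᵥ (M' *ᵥ v)).re =
      (star x ⬝ᵥ ((A.map f) *ᵥ x)).re + (star y ⬝ᵥ ((D.map f) *ᵥ y)).re := by
    rw [hM', Matrix.fromBlocks_map, hstar, hvelim, Matrix.fromBlocks_mulVec,
      sumElim_dotProduct_sumElim, dotProduct_add, dotProduct_add]
    simp only [Sum.elim_comp_inl, Sum.elim_comp_inr]
    have hneg : ((-Zᵀ).map f) *ᵥ x = -((Zᵀ.map f) *ᵥ x) := by
      have hm : (-Zᵀ).map (f : ℝ → ℂ) = -(Zᵀ.map f) := by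
        ext i j; simp [Matrix.map_apply]
      rw [hm, Matrix.neg_mulVec]
    rw [hneg, dotProduct_neg, conj_cross]
    simp only [Complex.add_re, Complex.neg_re, Complex.conj_re]
    ring
  -- combine
  have hcr1 := complex_rayleigh hA x
  have hcr2 := complex_rayleigh hD y
  rw [hrhs] at hlhs
  constructor
  · have : min (lamMin hA) (lamMin hD) * (Sx + Sy) ≤ μ * (Sx + Sy) := by
      rw [← hlhs, mul_add]
      refine add_le_add (le_trans ?_ hcr1.1) (le_trans ?_ hcr2.1)
      · exact mul_le_mul_of_nonneg_right (min_le_left _ _) hSxnn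
      · exact mul_le_mul_of_nonneg_right (min_le_right _ _) hSynn
    exact le_of_mul_le_mul_right this hSpos
  · have : μ * (Sx + Sy) ≤ max (lamMax hA) (lamMax hD) * (Sx + Sy) := by
      rw [← hlhs, mul_add]
      refine add_le_add (le_trans hcr1.2 ?_) (le_trans hcr2.2 ?_)
      · exact mul_le_mul_of_nonneg_right (le_max_left _ _) hSxnn
      · exact mul_le_mul_of_nonneg_right (le_max_right _ _) hSynn
    exact le_of_mul_le_mul_right this hSpos
end

section
/- Let d₁, d₂ be positive integers, A a d₁×d₁ real symmetric matrix, D a d₂×d₂ real symmetric matrix, and Z an arbitrary d₁×d₂ real matrix. Let J = [[A, Z], [−Zᵀ, D]]. Then every non-real eigenvalue μ of J satisfies (λmin(A) + λmin(D))/2 ≤ Re(μ) ≤ (λmax(A) + λmax(D))/2 and |Im(μ)| ≤ ‖Z‖. -/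
open Matrix

/-- The ℓ²→ℓ² operator norm of a rectangular real matrix. -/
noncomputable def l2OpNorm {m n : ℕ} (Z : Matrix (Fin m) (Fin n) ℝ) : ℝ :=
  ‖LinearMap.toContinuousLinearMap (Matrix.toEuclideanLin Z)‖

section Aux

variable {n m : Type*} [Fintype n] [Fintype m]

lemma dot_expand (M : Matrix m n ℝ) (x : m → ℂ) (y : n → ℂ) :
    star x ⬝ᵥ (M.map (algebraMap ℝ ℂ) *ᵥ y)
      = ∑ i, ∑ j, (M i j : ℂ) * ((starRingEnd ℂ) (x i) * y j) := by
  simp only [dotProduct, mulVec, Matrix.map_apply, Finset.mul_sum, Pi.star_apply,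
    RCLike.star_def, Complex.coe_algebraMap]
  refine Finset.sum_congr rfl fun i _ => Finset.sum_congr rfl fun j _ => ?_
  ring

lemma quad_re (M : Matrix n n ℝ) (x : n → ℂ) :
    (star x ⬝ᵥ (M.map (algebraMap ℝ ℂ) *ᵥ x)).re
      = (fun i => (x i).re) ⬝ᵥ (M *ᵥ fun i => (x i).re)
        + (fun i => (x i).im) ⬝ᵥ (M *ᵥ fun i => (x i).im) := by
  rw [dot_expand, Complex.re_sum]
  simp only [Complex.re_sum, dotProduct, mulVec, Finset.mul_sum]
  rw [← Finset.sum_add_distrib]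
  refine Finset.sum_congr rfl fun i _ => ?_
  rw [← Finset.sum_add_distrib]
  refine Finset.sum_congr rfl fun j _ => ?_
  simp only [Complex.mul_re, Complex.mul_im, Complex.conj_re, Complex.conj_im,
    Complex.ofReal_re, Complex.ofReal_im]
  ring

lemma quad_im (M : Matrix n n ℝ) (hM : M.IsHermitian) (x : n → ℂ) :
    (star x ⬝ᵥ (M.map (algebraMap ℝ ℂ) *ᵥ x)).im = 0 := by
  have hsym : ∀ i j, M j i = M i j := fun i j => by
    conv_lhs => rw [← hM]
    simp [conjTranspose_apply]
  rw [dot_expand, Complex.im_sum]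
  simp only [Complex.im_sum]
  have key : ∀ i j : n, ((M i j : ℂ) * ((starRingEnd ℂ) (x i) * x j)).im
      = -((M j i : ℂ) * ((starRingEnd ℂ) (x j) * x i)).im := by
    intro i j
    rw [hsym i j]
    simp only [Complex.mul_im, Complex.mul_re, Complex.conj_re, Complex.conj_im,
      Complex.ofReal_re, Complex.ofReal_im]
    ring
  have h2 : ∑ i : n, ∑ j : n, ((M i j : ℂ) * ((starRingEnd ℂ) (x i) * x j)).im
      = -∑ i : n, ∑ j : n, ((M i j : ℂ) * ((starRingEnd ℂ) (x i) * x j)).im := by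
    calc ∑ i : n, ∑ j : n, ((M i j : ℂ) * ((starRingEnd ℂ) (x i) * x j)).im
        = ∑ i : n, ∑ j : n, -((M j i : ℂ) * ((starRingEnd ℂ) (x j) * x i)).im :=
          Finset.sum_congr rfl fun i _ => Finset.sum_congr rfl fun j _ => key i j
      _ = -∑ i : n, ∑ j : n, ((M j i : ℂ) * ((starRingEnd ℂ) (x j) * x i)).im := by
          simp [Finset.sum_neg_distrib]
      _ = -∑ i : n, ∑ j : n, ((M i j : ℂ) * ((starRingEnd ℂ) (x i) * x j)).im := by
          rw [Finset.sum_comm]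
  linarith

lemma cross_conj (Z : Matrix m n ℝ) (x : m → ℂ) (y : n → ℂ) :
    star y ⬝ᵥ ((Zᵀ).map (algebraMap ℝ ℂ) *ᵥ x)
      = (starRingEnd ℂ) (star x ⬝ᵥ (Z.map (algebraMap ℝ ℂ) *ᵥ y)) := by
  rw [dot_expand, dot_expand, map_sum, Finset.sum_comm]
  refine Finset.sum_congr rfl fun i _ => ?_
  rw [map_sum]
  refine Finset.sum_congr rfl fun j _ => ?_
  simp only [transpose_apply, _root_.map_mul, Complex.conj_ofReal, Complex.conj_conj]
  ring

lemma star_dot_self (x : n → ℂ) :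
    star x ⬝ᵥ x = ((∑ i, Complex.normSq (x i) : ℝ) : ℂ) := by
  push_cast
  simp only [dotProduct, Pi.star_apply, RCLike.star_def]
  exact Finset.sum_congr rfl fun i _ => by
    rw [Complex.normSq_eq_conj_mul_self]

lemma mulVec_sq_le' {d₁ d₂ : ℕ} (Z : Matrix (Fin d₁) (Fin d₂) ℝ) (c : Fin d₂ → ℝ) :
    ∑ i, ((Z *ᵥ c) i) ^ 2 ≤ l2OpNorm Z ^ 2 * ∑ j, (c j) ^ 2 := by
  have h := (LinearMap.toContinuousLinearMap (Matrix.toEuclideanLin Z)).le_opNorm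
    ((WithLp.equiv 2 (Fin d₂ → ℝ)).symm c)
  rw [LinearMap.coe_toContinuousLinearMap'] at h
  change ‖(WithLp.toLp 2 (Z *ᵥ c) : EuclideanSpace ℝ (Fin d₁))‖ ≤ ‖LinearMap.toContinuousLinearMap (Matrix.toEuclideanLin Z)‖ * ‖(WithLp.toLp 2 c : EuclideanSpace ℝ (Fin d₂))‖ at h
  rw [EuclideanSpace.norm_eq, EuclideanSpace.norm_eq] at h
  simp only [PiLp.toLp_apply, Real.norm_eq_abs] at h
  simp only [_root_.sq_abs] at h
  have h1 : (0:ℝ) ≤ ∑ i, ((Z *ᵥ c) i) ^ 2 := Finset.sum_nonneg fun i _ => sq_nonneg _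
  have h2 : (0:ℝ) ≤ ∑ j, (c j) ^ 2 := Finset.sum_nonneg fun j _ => sq_nonneg _
  calc ∑ i, ((Z *ᵥ c) i) ^ 2 = Real.sqrt (∑ i, ((Z *ᵥ c) i) ^ 2) ^ 2 := (Real.sq_sqrt h1).symm
    _ ≤ (l2OpNorm Z * Real.sqrt (∑ j, (c j) ^ 2)) ^ 2 := by
        apply pow_le_pow_left₀ (Real.sqrt_nonneg _) h
    _ = l2OpNorm Z ^ 2 * ∑ j, (c j) ^ 2 := by
        rw [mul_pow, Real.sq_sqrt h2]

lemma abs_dot_le (x : m → ℂ) (w : m → ℂ) :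
    ‖star x ⬝ᵥ w‖ ^ 2
      ≤ (∑ i, Complex.normSq (x i)) * (∑ i, Complex.normSq (w i)) := by
  have h1 : ‖star x ⬝ᵥ w‖ ≤ ∑ i, ‖x i‖ * ‖w i‖ := by
    refine le_trans (norm_sum_le _ _) ?_
    refine Finset.sum_le_sum fun i _ => ?_
    simp [Pi.star_apply, _root_.map_mul]
  have h2 : (∑ i, ‖x i‖ * ‖w i‖) ^ 2
      ≤ (∑ i, ‖x i‖ ^ 2) * (∑ i, ‖w i‖ ^ 2) :=
    Finset.sum_mul_sq_le_sq_mul_sq _ _ _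
  calc ‖star x ⬝ᵥ w‖ ^ 2 ≤ (∑ i, ‖x i‖ * ‖w i‖) ^ 2 :=
        pow_le_pow_left₀ (norm_nonneg _) h1 2
    _ ≤ (∑ i, ‖x i‖ ^ 2) * (∑ i, ‖w i‖ ^ 2) := h2
    _ = (∑ i, Complex.normSq (x i)) * (∑ i, Complex.normSq (w i)) := by
        simp [Complex.sq_norm]

lemma cross_abs {d₁ d₂ : ℕ} (Z : Matrix (Fin d₁) (Fin d₂) ℝ) (x : Fin d₁ → ℂ)
    (y : Fin d₂ → ℂ) :
    ‖star x ⬝ᵥ (Z.map (algebraMap ℝ ℂ) *ᵥ y)‖ ^ 2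
      ≤ l2OpNorm Z ^ 2 * (∑ i, Complex.normSq (x i)) * (∑ j, Complex.normSq (y j)) := by
  have hre : ∀ i, ((Z.map (algebraMap ℝ ℂ) *ᵥ y) i).re = (Z *ᵥ fun j => (y j).re) i := by
    intro i
    simp only [mulVec, dotProduct, Matrix.map_apply, Complex.coe_algebraMap, Complex.re_sum]
    exact Finset.sum_congr rfl fun j _ => by
      simp [Complex.mul_re]
  have him : ∀ i, ((Z.map (algebraMap ℝ ℂ) *ᵥ y) i).im = (Z *ᵥ fun j => (y j).im) i := by
    intro i
    simp only [mulVec, dotProduct, Matrix.map_apply, Complex.coe_algebraMap, Complex.im_sum]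
    exact Finset.sum_congr rfl fun j _ => by
      simp [Complex.mul_im]
  have hkey : ∑ i, Complex.normSq ((Z.map (algebraMap ℝ ℂ) *ᵥ y) i)
      ≤ l2OpNorm Z ^ 2 * ∑ j, Complex.normSq (y j) := by
    have hy : ∑ j, Complex.normSq (y j)
        = (∑ j, ((y j).re) ^ 2) + ∑ j, ((y j).im) ^ 2 := by
      rw [← Finset.sum_add_distrib]
      exact Finset.sum_congr rfl fun j _ => by rw [Complex.normSq_apply]; ring
    calc ∑ i, Complex.normSq ((Z.map (algebraMap ℝ ℂ) *ᵥ y) i)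
        = (∑ i, ((Z *ᵥ fun j => (y j).re) i) ^ 2)
          + ∑ i, ((Z *ᵥ fun j => (y j).im) i) ^ 2 := by
          rw [← Finset.sum_add_distrib]
          refine Finset.sum_congr rfl fun i _ => ?_
          rw [Complex.normSq_apply, hre i, him i]
          ring
      _ ≤ l2OpNorm Z ^ 2 * (∑ j, ((y j).re) ^ 2) + l2OpNorm Z ^ 2 * ∑ j, ((y j).im) ^ 2 :=
          add_le_add (mulVec_sq_le' Z _) (mulVec_sq_le' Z _)
      _ = l2OpNorm Z ^ 2 * ∑ j, Complex.normSq (y j) := by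
          rw [hy, mul_add]
  have hxnn : (0:ℝ) ≤ ∑ i, Complex.normSq (x i) :=
    Finset.sum_nonneg fun i _ => Complex.normSq_nonneg _
  calc ‖star x ⬝ᵥ (Z.map (algebraMap ℝ ℂ) *ᵥ y)‖ ^ 2
      ≤ (∑ i, Complex.normSq (x i)) * ∑ i, Complex.normSq ((Z.map (algebraMap ℝ ℂ) *ᵥ y) i) :=
        abs_dot_le _ _
    _ ≤ (∑ i, Complex.normSq (x i)) * (l2OpNorm Z ^ 2 * ∑ j, Complex.normSq (y j)) :=
        mul_le_mul_of_nonneg_left hkey hxnn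
    _ = l2OpNorm Z ^ 2 * (∑ i, Complex.normSq (x i)) * (∑ j, Complex.normSq (y j)) := by
        ring

variable [DecidableEq n]

lemma sub_smul_posSemidef {A : Matrix n n ℝ} (hA : A.IsHermitian) (c : ℝ)
    (hc : ∀ i, c ≤ hA.eigenvalues i) : (A - c • 1).PosSemidef := by
  set U : Matrix n n ℝ := (hA.eigenvectorUnitary : Matrix n n ℝ) with hU
  have hUU : U * star U = 1 := Unitary.mul_star_self_of_mem hA.eigenvectorUnitary.2
  have h1 : A - c • 1 = U * (diagonal (fun i => hA.eigenvalues i - c)) * star U := by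
    have hd : diagonal (fun i => hA.eigenvalues i - c)
        = diagonal (RCLike.ofReal ∘ hA.eigenvalues) - c • 1 := by
      rw [← diagonal_one, ← diagonal_smul, diagonal_sub]
      funext i
      simp [smul_eq_mul]
    rw [hd, mul_sub, sub_mul]
    have hs := hA.spectral_theorem
    rw [Unitary.conjStarAlgAut_apply] at hs
    rw [hU, ← hs]
    congr 1
    rw [← hU, mul_smul_comm, smul_mul_assoc, mul_one, hUU]
  rw [h1]
  exact (Matrix.PosSemidef.diagonal fun i => sub_nonneg.mpr (hc i)).mul_mul_conjTranspose_same U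

lemma smul_sub_posSemidef {A : Matrix n n ℝ} (hA : A.IsHermitian) (c : ℝ)
    (hc : ∀ i, hA.eigenvalues i ≤ c) : (c • 1 - A).PosSemidef := by
  set U : Matrix n n ℝ := (hA.eigenvectorUnitary : Matrix n n ℝ) with hU
  have hUU : U * star U = 1 := Unitary.mul_star_self_of_mem hA.eigenvectorUnitary.2
  have h1 : c • 1 - A = U * (diagonal (fun i => c - hA.eigenvalues i)) * star U := by
    have hd : diagonal (fun i => c - hA.eigenvalues i)
        = c • 1 - diagonal (RCLike.ofReal ∘ hA.eigenvalues) := by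
      rw [← diagonal_one, ← diagonal_smul, diagonal_sub]
      funext i
      simp [smul_eq_mul]
    rw [hd, mul_sub, sub_mul]
    have hs := hA.spectral_theorem
    rw [Unitary.conjStarAlgAut_apply] at hs
    rw [hU, ← hs]
    congr 1
    rw [← hU, mul_smul_comm, smul_mul_assoc, mul_one, hUU]
  rw [h1]
  exact (Matrix.PosSemidef.diagonal fun i => sub_nonneg.mpr (hc i)).mul_mul_conjTranspose_same U

lemma quad_ge {A : Matrix n n ℝ} (hA : A.IsHermitian) (x : n → ℂ) :
    lamMin hA * ∑ i, Complex.normSq (x i)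
      ≤ (star x ⬝ᵥ (A.map (algebraMap ℝ ℂ) *ᵥ x)).re := by
  have hb : BddBelow (Set.range hA.eigenvalues) := (Set.finite_range _).bddBelow
  have hpsd := sub_smul_posSemidef hA (lamMin hA) fun i => ciInf_le hb i
  have key : ∀ a : n → ℝ, lamMin hA * ∑ i, (a i) ^ 2 ≤ a ⬝ᵥ (A *ᵥ a) := by
    intro a
    have h := hpsd.dotProduct_mulVec_nonneg a
    rw [star_trivial, sub_mulVec, smul_mulVec, one_mulVec, dotProduct_sub,
      dotProduct_smul, smul_eq_mul] at h
    have hd : a ⬝ᵥ a = ∑ i, (a i) ^ 2 := by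
      simp [dotProduct, sq]
    rw [hd] at h
    linarith
  rw [quad_re]
  have hsum : ∑ i, Complex.normSq (x i)
      = (∑ i, ((x i).re) ^ 2) + ∑ i, ((x i).im) ^ 2 := by
    rw [← Finset.sum_add_distrib]
    exact Finset.sum_congr rfl fun i _ => by rw [Complex.normSq_apply]; ring
  rw [hsum, mul_add]
  exact add_le_add (key _) (key _)

lemma quad_le {A : Matrix n n ℝ} (hA : A.IsHermitian) (x : n → ℂ) :
    (star x ⬝ᵥ (A.map (algebraMap ℝ ℂ) *ᵥ x)).re
      ≤ lamMax hA * ∑ i, Complex.normSq (x i) := by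
  have hb : BddAbove (Set.range hA.eigenvalues) := (Set.finite_range _).bddAbove
  have hpsd := smul_sub_posSemidef hA (lamMax hA) fun i => le_ciSup hb i
  have key : ∀ a : n → ℝ, a ⬝ᵥ (A *ᵥ a) ≤ lamMax hA * ∑ i, (a i) ^ 2 := by
    intro a
    have h := hpsd.dotProduct_mulVec_nonneg a
    rw [star_trivial, sub_mulVec, smul_mulVec, one_mulVec, dotProduct_sub,
      dotProduct_smul, smul_eq_mul] at h
    have hd : a ⬝ᵥ a = ∑ i, (a i) ^ 2 := by
      simp [dotProduct, sq]
    rw [hd] at h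
    linarith
  rw [quad_re]
  have hsum : ∑ i, Complex.normSq (x i)
      = (∑ i, ((x i).re) ^ 2) + ∑ i, ((x i).im) ^ 2 := by
    rw [← Finset.sum_add_distrib]
    exact Finset.sum_congr rfl fun i _ => by rw [Complex.normSq_apply]; ring
  rw [hsum, mul_add]
  exact add_le_add (key _) (key _)

end Aux

theorem stmt1 {d₁ d₂ : ℕ} (hd₁ : 0 < d₁) (hd₂ : 0 < d₂)
    (A : Matrix (Fin d₁) (Fin d₁) ℝ) (D : Matrix (Fin d₂) (Fin d₂) ℝ)
    (Z : Matrix (Fin d₁) (Fin d₂) ℝ)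
    (hA : A.IsHermitian) (hD : D.IsHermitian)
    (μ : ℂ)
    (hμ : μ ∈ spectrum ℂ ((Matrix.fromBlocks A Z (-Zᵀ) D).map (algebraMap ℝ ℂ)))
    (hμim : μ.im ≠ 0) :
    (lamMin hA + lamMin hD) / 2 ≤ μ.re ∧ μ.re ≤ (lamMax hA + lamMax hD) / 2 ∧
      |μ.im| ≤ l2OpNorm Z := by
  set φ := algebraMap ℝ ℂ with hφ
  set M := (Matrix.fromBlocks A Z (-Zᵀ) D).map φ with hM
  -- obtain an eigenvector
  have hnu : ¬ IsUnit (algebraMap ℂ (Matrix (Fin d₁ ⊕ Fin d₂) (Fin d₁ ⊕ Fin d₂) ℂ) μ - M) :=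
    spectrum.mem_iff.mp hμ
  have hdet : (algebraMap ℂ (Matrix (Fin d₁ ⊕ Fin d₂) (Fin d₁ ⊕ Fin d₂) ℂ) μ - M).det = 0 := by
    by_contra hne
    exact hnu ((Matrix.isUnit_iff_isUnit_det _).mpr (isUnit_iff_ne_zero.mpr hne))
  obtain ⟨v, hv0, hv⟩ := Matrix.exists_mulVec_eq_zero_iff.mpr hdet
  have hMv : M *ᵥ v = μ • v := by
    rw [sub_mulVec, Algebra.algebraMap_eq_smul_one, smul_mulVec, one_mulVec] at hv
    exact (sub_eq_zero.mp hv).symm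
  set x : Fin d₁ → ℂ := fun i => v (Sum.inl i) with hx
  set y : Fin d₂ → ℂ := fun j => v (Sum.inr j) with hy
  have hvxy : v = Sum.elim x y := by funext k; cases k <;> rfl
  have hblock : M = Matrix.fromBlocks (A.map φ) (Z.map φ) ((-Zᵀ).map φ) (D.map φ) :=
    Matrix.fromBlocks_map A Z (-Zᵀ) D φ
  have hmul := hMv
  rw [hblock, hvxy, Matrix.fromBlocks_mulVec] at hmul
  have E1 : A.map φ *ᵥ x + Z.map φ *ᵥ y = μ • x := by
    funext i
    exact congrFun hmul (Sum.inl i)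
  have E2 : (-Zᵀ).map φ *ᵥ x + D.map φ *ᵥ y = μ • y := by
    funext j
    exact congrFun hmul (Sum.inr j)
  set nx := ∑ i, Complex.normSq (x i) with hnx
  set ny := ∑ j, Complex.normSq (y j) with hny
  set c := star x ⬝ᵥ (Z.map φ *ᵥ y) with hc
  set α := star x ⬝ᵥ (A.map φ *ᵥ x) with hα
  set β := star y ⬝ᵥ (D.map φ *ᵥ y) with hβ
  have eq1 : α + c = μ * (nx : ℂ) := by
    rw [hα, hc, ← dotProduct_add, E1, dotProduct_smul, star_dot_self, smul_eq_mul]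
  have hneg : (-Zᵀ).map φ *ᵥ x = -((Zᵀ).map φ *ᵥ x) := by
    have : (-Zᵀ).map φ = -((Zᵀ).map φ) := by
      ext i j
      simp [Matrix.map_apply]
    rw [this, neg_mulVec]
  have eq2 : -(starRingEnd ℂ) c + β = μ * (ny : ℂ) := by
    have h := congrArg (fun w => star y ⬝ᵥ w) E2
    simp only [dotProduct_add] at h
    rw [hneg, dotProduct_neg, cross_conj] at h
    rw [hc, hβ]
    rw [h, dotProduct_smul, star_dot_self, smul_eq_mul]
  -- imaginary parts
  have hαim : α.im = 0 := quad_im A hA x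
  have hβim : β.im = 0 := quad_im D hD y
  have him1 : c.im = μ.im * nx := by
    have := congrArg Complex.im eq1
    simpa [hαim, Complex.add_im, Complex.mul_im] using this
  have him2 : c.im = μ.im * ny := by
    have := congrArg Complex.im eq2
    simpa [hβim, Complex.add_im, Complex.neg_im, Complex.conj_im, Complex.mul_im] using this
  have hnxy : nx = ny := mul_left_cancel₀ hμim (him1 ▸ him2)
  -- nx > 0
  have hnxnn : 0 ≤ nx := Finset.sum_nonneg fun i _ => Complex.normSq_nonneg _
  have hnynn : 0 ≤ ny := Finset.sum_nonneg fun j _ => Complex.normSq_nonneg _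
  have hnxpos : 0 < nx := by
    obtain ⟨k, hk⟩ : ∃ k, v k ≠ 0 := by
      by_contra h
      push_neg at h
      exact hv0 (funext h)
    cases k with
    | inl i =>
      have : 0 < Complex.normSq (x i) := Complex.normSq_pos.mpr hk
      exact lt_of_lt_of_le this (Finset.single_le_sum
        (fun i _ => Complex.normSq_nonneg (x i)) (Finset.mem_univ i))
    | inr j =>
      have : 0 < Complex.normSq (y j) := Complex.normSq_pos.mpr hk
      rw [hnxy]
      exact lt_of_lt_of_le this (Finset.single_le_sum
        (fun j _ => Complex.normSq_nonneg (y j)) (Finset.mem_univ j))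
  -- real parts
  have hre1 : α.re + c.re = μ.re * nx := by
    have := congrArg Complex.re eq1
    simpa [Complex.add_re, Complex.mul_re] using this
  have hre2 : -c.re + β.re = μ.re * ny := by
    have := congrArg Complex.re eq2
    simpa [Complex.add_re, Complex.neg_re, Complex.conj_re, Complex.mul_re] using this
  have hsumre : α.re + β.re = 2 * μ.re * nx := by
    rw [← hnxy] at hre2
    linarith
  have hαlb : lamMin hA * nx ≤ α.re := quad_ge hA x
  have hαub : α.re ≤ lamMax hA * nx := quad_le hA x
  have hβlb : lamMin hD * nx ≤ β.re := by
    rw [hnxy]; exact quad_ge hD y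
  have hβub : β.re ≤ lamMax hD * nx := by
    rw [hnxy]; exact quad_le hD y
  refine ⟨?_, ?_, ?_⟩
  · have h : (lamMin hA + lamMin hD) * nx ≤ (2 * μ.re) * nx := by nlinarith
    have := (mul_le_mul_iff_left₀ hnxpos).mp h
    linarith
  · have h : (2 * μ.re) * nx ≤ (lamMax hA + lamMax hD) * nx := by nlinarith
    have := (mul_le_mul_iff_left₀ hnxpos).mp h
    linarith
  · have hL : 0 ≤ l2OpNorm Z := norm_nonneg _
    have habs : ‖c‖ ^ 2 ≤ (l2OpNorm Z * nx) ^ 2 := by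
      have := cross_abs Z x y
      rw [← hc, ← hnx, ← hny] at this
      calc ‖c‖ ^ 2 ≤ l2OpNorm Z ^ 2 * nx * ny := this
        _ = (l2OpNorm Z * nx) ^ 2 := by rw [hnxy]; ring
    have himle : |c.im| ≤ ‖c‖ := Complex.abs_im_le_norm c
    have he : |c.im| = |μ.im| * nx := by
      rw [him1, abs_mul, abs_of_nonneg hnxnn]
    have h1 : (|μ.im| * nx) ^ 2 ≤ (l2OpNorm Z * nx) ^ 2 := by
      calc (|μ.im| * nx) ^ 2 = |c.im| ^ 2 := by rw [he]
        _ ≤ ‖c‖ ^ 2 := pow_le_pow_left₀ (abs_nonneg _) himle 2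
        _ ≤ (l2OpNorm Z * nx) ^ 2 := habs
    have hb : 0 ≤ l2OpNorm Z * nx := mul_nonneg hL hnxnn
    have h2 : |μ.im| * nx ≤ l2OpNorm Z * nx := le_of_pow_le_pow_left₀ two_ne_zero hb h1
    exact (mul_le_mul_iff_left₀ hnxpos).mp h2
end

section
/- Let d₁, d₂ be positive integers, A a d₁×d₁ real symmetric matrix, D a d₂×d₂ real symmetric matrix, Z a d₁×d₂ real matrix, and J = [[A, Z], [−Zᵀ, D]]. Suppose the spectra of A and D are separated, i.e., either λmax(D) < λmin(A) with gap δ = λmin(A) − λmax(D), or λmax(A) < λmin(D) with gap δ = λmin(D) − λmax(A). If ‖Z‖ ≤ δ/2, then every eigenvalue of J is real. -/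
open Matrix

section Aux

open scoped ComplexOrder

private lemma psd_sub_smul {n : Type*} [Fintype n] [DecidableEq n] {A : Matrix n n ℝ}
    (hA : A.IsHermitian) {c : ℝ} (h : ∀ i, c ≤ hA.eigenvalues i) :
    (A - c • (1 : Matrix n n ℝ)).PosSemidef := by
  nth_rewrite 1 [hA.spectral_theorem]
  have h1 : (c • (1 : Matrix n n ℝ)) =
      (hA.eigenvectorUnitary : Matrix n n ℝ) * (c • 1) *
        (star (hA.eigenvectorUnitary : Matrix n n ℝ)) := by
    rw [Matrix.mul_smul, Matrix.smul_mul, mul_one,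
      (Matrix.mem_unitaryGroup_iff).mp hA.eigenvectorUnitary.2]
  rw [h1, Unitary.conjStarAlgAut_apply, ← Matrix.sub_mul, ← Matrix.mul_sub, Matrix.star_eq_conjTranspose]
  have h2 : (Matrix.diagonal (RCLike.ofReal ∘ hA.eigenvalues) - c • (1 : Matrix n n ℝ)) =
      Matrix.diagonal (fun i => hA.eigenvalues i - c) := by
    rw [Matrix.smul_one_eq_diagonal, ← Matrix.diagonal_sub]
    rfl
  rw [h2]
  exact (Matrix.PosSemidef.diagonal (fun i => by simpa using h i)).mul_mul_conjTranspose_same _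

private lemma psd_smul_sub {n : Type*} [Fintype n] [DecidableEq n] {A : Matrix n n ℝ}
    (hA : A.IsHermitian) {c : ℝ} (h : ∀ i, hA.eigenvalues i ≤ c) :
    (c • (1 : Matrix n n ℝ) - A).PosSemidef := by
  nth_rewrite 1 [hA.spectral_theorem]
  have h1 : (c • (1 : Matrix n n ℝ)) =
      (hA.eigenvectorUnitary : Matrix n n ℝ) * (c • 1) *
        (star (hA.eigenvectorUnitary : Matrix n n ℝ)) := by
    rw [Matrix.mul_smul, Matrix.smul_mul, mul_one,
      (Matrix.mem_unitaryGroup_iff).mp hA.eigenvectorUnitary.2]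
  rw [h1, Unitary.conjStarAlgAut_apply, ← Matrix.sub_mul, ← Matrix.mul_sub, Matrix.star_eq_conjTranspose]
  have h2 : (c • (1 : Matrix n n ℝ) - Matrix.diagonal (RCLike.ofReal ∘ hA.eigenvalues)) =
      Matrix.diagonal (fun i => c - hA.eigenvalues i) := by
    rw [Matrix.smul_one_eq_diagonal, ← Matrix.diagonal_sub]
    rfl
  rw [h2]
  exact (Matrix.PosSemidef.diagonal (fun i => by simpa using h i)).mul_mul_conjTranspose_same _

private lemma psd_map {n : Type*} [Fintype n] [DecidableEq n] {M : Matrix n n ℝ}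
    (hM : M.PosSemidef) : (M.map (algebraMap ℝ ℂ)).PosSemidef := by
  obtain ⟨B, rfl⟩ : ∃ B : Matrix n n ℝ, M = Bᴴ * B := by
    open scoped MatrixOrder in exact CStarAlgebra.nonneg_iff_eq_star_mul_self.mp hM.nonneg
  have h1 : (Bᴴ * B).map (algebraMap ℝ ℂ) =
      (B.map (algebraMap ℝ ℂ))ᴴ * (B.map (algebraMap ℝ ℂ)) := by
    rw [Matrix.map_mul, Matrix.conjTranspose_map]
    intro a
    simp [Complex.conj_ofReal]
  rw [h1]
  exact Matrix.posSemidef_conjTranspose_mul_self _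

private lemma dp_sq {n : Type*} [Fintype n] (v : n → ℝ) :
    v ⬝ᵥ v = ‖(WithLp.equiv 2 (n → ℝ)).symm v‖ ^ 2 := by
  rw [← real_inner_self_eq_norm_sq, WithLp.equiv_symm_apply, EuclideanSpace.inner_toLp_toLp, star_trivial]

private lemma zpsd {m n : ℕ} {Z : Matrix (Fin m) (Fin n) ℝ} {c : ℝ}
    (hZ : l2OpNorm Z ≤ c) :
    ((c ^ 2) • (1 : Matrix (Fin n) (Fin n) ℝ) - Zᵀ * Z).PosSemidef := by
  refine Matrix.PosSemidef.of_dotProduct_mulVec_nonneg ?_ ?_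
  · rw [Matrix.smul_one_eq_diagonal]
    exact (Matrix.isHermitian_diagonal _).sub (Matrix.isHermitian_conjTranspose_mul_self Z)
  · intro y
    rw [star_trivial, Matrix.sub_mulVec, dotProduct_sub, Matrix.smul_mulVec,
      Matrix.one_mulVec, dotProduct_smul, ← Matrix.mulVec_mulVec,
      Matrix.dotProduct_mulVec, Matrix.vecMul_transpose]
    have hnorm : ‖(WithLp.equiv 2 (Fin m → ℝ)).symm (Z *ᵥ y)‖ ≤
        c * ‖(WithLp.equiv 2 (Fin n → ℝ)).symm y‖ := by
      have h1 := (LinearMap.toContinuousLinearMap (Matrix.toEuclideanLin Z)).le_opNorm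
        ((WithLp.equiv 2 (Fin n → ℝ)).symm y)
      rw [LinearMap.coe_toContinuousLinearMap', WithLp.equiv_symm_apply,
        Matrix.toEuclideanLin_apply_piLp_toLp] at h1
      calc ‖(WithLp.equiv 2 (Fin m → ℝ)).symm (Z *ᵥ y)‖
          ≤ l2OpNorm Z * ‖(WithLp.equiv 2 (Fin n → ℝ)).symm y‖ := h1
        _ ≤ c * ‖(WithLp.equiv 2 (Fin n → ℝ)).symm y‖ := by
            exact mul_le_mul_of_nonneg_right hZ (norm_nonneg _)
    rw [sub_nonneg, dp_sq, dp_sq, smul_eq_mul]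
    nlinarith [norm_nonneg ((WithLp.equiv 2 (Fin m → ℝ)).symm (Z *ᵥ y)),
      norm_nonneg ((WithLp.equiv 2 (Fin n → ℝ)).symm y)]

private lemma map_sub_smul {n : Type*} [Fintype n] [DecidableEq n] (A : Matrix n n ℝ) (c : ℝ) :
    (A - c • (1 : Matrix n n ℝ)).map (algebraMap ℝ ℂ) =
      A.map (algebraMap ℝ ℂ) - (c : ℂ) • (1 : Matrix n n ℂ) := by
  ext i j
  by_cases h : i = j <;> simp [Matrix.map_apply, Matrix.one_apply, h]

private lemma map_smul_sub {n : Type*} [Fintype n] [DecidableEq n] (A : Matrix n n ℝ) (c : ℝ) :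
    (c • (1 : Matrix n n ℝ) - A).map (algebraMap ℝ ℂ) =
      (c : ℂ) • (1 : Matrix n n ℂ) - A.map (algebraMap ℝ ℂ) := by
  ext i j
  by_cases h : i = j <;> simp [Matrix.map_apply, Matrix.one_apply, h]

private lemma map_conjT {m n : Type*} (Z : Matrix m n ℝ) :
    (Z.map (algebraMap ℝ ℂ))ᴴ = Zᵀ.map (algebraMap ℝ ℂ) := by
  ext i j
  simp [Matrix.conjTranspose_apply, Matrix.map_apply, Complex.conj_ofReal]

private lemma dp_star_im {n : Type*} [Fintype n] (x : n → ℂ) :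
    (star x ⬝ᵥ x).im = 0 ∧ 0 ≤ (star x ⬝ᵥ x).re := by
  have h := dotProduct_star_self_nonneg x
  rw [Complex.le_def] at h
  exact ⟨h.2.symm, by simpa using h.1⟩

/-- lower bound for the complexified quadratic form -/
private lemma quad_lower {n : Type*} [Fintype n] [DecidableEq n] {A : Matrix n n ℝ}
    (hA : A.IsHermitian) {c : ℝ} (h : ∀ i, c ≤ hA.eigenvalues i) (x : n → ℂ) :
    (star x ⬝ᵥ (A.map (algebraMap ℝ ℂ) *ᵥ x)).im = 0 ∧
    c * (star x ⬝ᵥ x).re ≤ (star x ⬝ᵥ (A.map (algebraMap ℝ ℂ) *ᵥ x)).re := by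
  have h2 := (psd_map (psd_sub_smul hA h)).dotProduct_mulVec_nonneg x
  rw [map_sub_smul, Complex.le_def, Matrix.sub_mulVec, dotProduct_sub,
    Matrix.smul_mulVec, Matrix.one_mulVec, dotProduct_smul] at h2
  obtain ⟨hre, him⟩ := h2
  obtain ⟨hxim, _⟩ := dp_star_im x
  simp only [Complex.sub_re, Complex.sub_im, Complex.zero_re, Complex.zero_im, smul_eq_mul,
    Complex.mul_re, Complex.mul_im, Complex.ofReal_re, Complex.ofReal_im, hxim,
    zero_mul, mul_zero, sub_zero, add_zero, zero_add] at hre him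
  exact ⟨by linarith, by linarith⟩

/-- upper bound for the complexified quadratic form -/
private lemma quad_upper {n : Type*} [Fintype n] [DecidableEq n] {A : Matrix n n ℝ}
    (hA : A.IsHermitian) {c : ℝ} (h : ∀ i, hA.eigenvalues i ≤ c) (x : n → ℂ) :
    (star x ⬝ᵥ (A.map (algebraMap ℝ ℂ) *ᵥ x)).im = 0 ∧
    (star x ⬝ᵥ (A.map (algebraMap ℝ ℂ) *ᵥ x)).re ≤ c * (star x ⬝ᵥ x).re := by
  have h2 := (psd_map (psd_smul_sub hA h)).dotProduct_mulVec_nonneg x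
  rw [map_smul_sub, Complex.le_def, Matrix.sub_mulVec, dotProduct_sub,
    Matrix.smul_mulVec, Matrix.one_mulVec, dotProduct_smul] at h2
  obtain ⟨hre, him⟩ := h2
  obtain ⟨hxim, _⟩ := dp_star_im x
  simp only [Complex.sub_re, Complex.sub_im, Complex.zero_re, Complex.zero_im, smul_eq_mul,
    Complex.mul_re, Complex.mul_im, Complex.ofReal_re, Complex.ofReal_im, hxim,
    zero_mul, mul_zero, sub_zero, add_zero, zero_add] at hre him
  exact ⟨by linarith, by linarith⟩

private lemma z_bound {m n : ℕ} {Z : Matrix (Fin m) (Fin n) ℝ} {c : ℝ}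
    (hZ : l2OpNorm Z ≤ c) (x : Fin m → ℂ) (y : Fin n → ℂ) :
    ‖star x ⬝ᵥ (Z.map (algebraMap ℝ ℂ) *ᵥ y)‖ ^ 2 ≤
      (star x ⬝ᵥ x).re * (c ^ 2 * (star y ⬝ᵥ y).re) := by
  set Z' := Z.map (algebraMap ℝ ℂ) with hZ'
  set x' := (WithLp.equiv 2 (Fin m → ℂ)).symm x with hx'
  set w' := (WithLp.equiv 2 (Fin m → ℂ)).symm (Z' *ᵥ y) with hw'
  have hinner : (inner ℂ x' w' : ℂ) = star x ⬝ᵥ (Z' *ᵥ y) :=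
    (EuclideanSpace.inner_toLp_toLp x (Z' *ᵥ y)).trans (dotProduct_comm _ _)
  have hxn : ‖x'‖ ^ 2 = (star x ⬝ᵥ x).re := by
    rw [← inner_self_eq_norm_sq (𝕜 := ℂ), dotProduct_comm]
    rfl
  have hcs := norm_inner_le_norm (𝕜 := ℂ) x' w'
  have hw2 : ‖w'‖ ^ 2 ≤ c ^ 2 * (star y ⬝ᵥ y).re := by
    have h1 : ‖w'‖ ^ 2 = (star y ⬝ᵥ ((Zᵀ * Z).map (algebraMap ℝ ℂ) *ᵥ y)).re := by
      rw [← inner_self_eq_norm_sq (𝕜 := ℂ), hw', WithLp.equiv_symm_apply,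
        EuclideanSpace.inner_toLp_toLp, dotProduct_comm, Matrix.star_mulVec, Matrix.dotProduct_mulVec, Matrix.vecMul_vecMul,
        ← Matrix.dotProduct_mulVec, map_conjT, hZ', ← Matrix.map_mul]
      rfl
    have h2 := (psd_map (zpsd hZ)).dotProduct_mulVec_nonneg y
    rw [Complex.le_def] at h2
    obtain ⟨h2re, h2im⟩ := h2
    rw [map_smul_sub, Matrix.sub_mulVec, dotProduct_sub, Matrix.smul_mulVec,
      Matrix.one_mulVec, dotProduct_smul] at h2re
    have hy : (star y ⬝ᵥ y).im = 0 := (dp_star_im y).1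
    simp only [Complex.sub_re, Complex.zero_re, smul_eq_mul, Complex.mul_re,
      Complex.ofReal_re, Complex.ofReal_im, hy, zero_mul, mul_zero, sub_zero] at h2re
    rw [h1]
    linarith
  have habs : ‖star x ⬝ᵥ (Z' *ᵥ y)‖ ≤ ‖x'‖ * ‖w'‖ := by
    rw [← hinner]
    exact hcs
  have h3 : ‖star x ⬝ᵥ (Z' *ᵥ y)‖ ^ 2 ≤ ‖x'‖ ^ 2 * ‖w'‖ ^ 2 := by
    rw [← mul_pow]
    exact pow_le_pow_left₀ (norm_nonneg _) habs 2
  calc ‖star x ⬝ᵥ (Z' *ᵥ y)‖ ^ 2 ≤ ‖x'‖ ^ 2 * ‖w'‖ ^ 2 := h3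
    _ ≤ (star x ⬝ᵥ x).re * (c ^ 2 * (star y ⬝ᵥ y).re) := by
        rw [hxn]
        exact mul_le_mul_of_nonneg_left hw2 (by rw [← hxn]; positivity)


set_option maxHeartbeats 1000000 in
open scoped ComplexOrder in
theorem stmt2 {d₁ d₂ : ℕ} (hd₁ : 0 < d₁) (hd₂ : 0 < d₂)
    (A : Matrix (Fin d₁) (Fin d₁) ℝ) (D : Matrix (Fin d₂) (Fin d₂) ℝ)
    (Z : Matrix (Fin d₁) (Fin d₂) ℝ)
    (hA : A.IsHermitian) (hD : D.IsHermitian)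
    (δ : ℝ)
    (hsep : (lamMax hD < lamMin hA ∧ δ = lamMin hA - lamMax hD) ∨
            (lamMax hA < lamMin hD ∧ δ = lamMin hD - lamMax hA))
    (hZ : l2OpNorm Z ≤ δ / 2) :
    ∀ μ ∈ spectrum ℂ ((Matrix.fromBlocks A Z (-Zᵀ) D).map (algebraMap ℝ ℂ)), μ.im = 0 := by
  intro μ hμ
  by_contra him
  haveI : Nonempty (Fin d₁) := Fin.pos_iff_nonempty.mp hd₁
  haveI : Nonempty (Fin d₂) := Fin.pos_iff_nonempty.mp hd₂
  have hδpos : 0 < δ := by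
    rcases hsep with ⟨h, rfl⟩ | ⟨h, rfl⟩ <;> linarith
  -- extract an eigenvector
  rw [spectrum.mem_iff, Matrix.isUnit_iff_isUnit_det, isUnit_iff_ne_zero, not_not] at hμ
  obtain ⟨v, hv0, hv⟩ := Matrix.exists_mulVec_eq_zero_iff.mpr hμ
  rw [Algebra.algebraMap_eq_smul_one, Matrix.sub_mulVec, Matrix.smul_mulVec,
    Matrix.one_mulVec, sub_eq_zero] at hv
  set f := algebraMap ℝ ℂ with hf
  set x : Fin d₁ → ℂ := v ∘ Sum.inl with hx
  set y : Fin d₂ → ℂ := v ∘ Sum.inr with hy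
  rw [Matrix.fromBlocks_map, Matrix.fromBlocks_mulVec] at hv
  have E1 : A.map f *ᵥ x + Z.map f *ᵥ y = μ • x := by
    funext i
    have := congr_fun hv (Sum.inl i)
    simpa [hx, hy] using this.symm
  have E2 : (-Zᵀ).map f *ᵥ x + D.map f *ᵥ y = μ • y := by
    funext i
    have := congr_fun hv (Sum.inr i)
    simpa [hx, hy] using this.symm
  set a := star x ⬝ᵥ (A.map f *ᵥ x) with ha
  set dd := star y ⬝ᵥ (D.map f *ᵥ y) with hdd
  set s := star x ⬝ᵥ (Z.map f *ᵥ y) with hs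
  set nx := star x ⬝ᵥ x with hnx
  set ny := star y ⬝ᵥ y with hny
  have e1 : a + s = μ * nx := by
    have h := congrArg (fun w => star x ⬝ᵥ w) E1
    simpa [dotProduct_add, dotProduct_smul, smul_eq_mul] using h
  have hcs : star y ⬝ᵥ ((-Zᵀ).map f *ᵥ x) = -(starRingEnd ℂ s) := by
    have h1 : ((-Zᵀ).map f : Matrix (Fin d₂) (Fin d₁) ℂ) = -((Z.map f)ᴴ) := by
      rw [map_conjT]
      ext i j
      simp [Matrix.map_apply, hf]
    have h2 : starRingEnd ℂ s = star y ⬝ᵥ ((Z.map f)ᴴ *ᵥ x) := by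
      rw [hs, starRingEnd_apply, Matrix.star_dotProduct, star_star, Matrix.star_mulVec,
        ← Matrix.dotProduct_mulVec]
    rw [h1, Matrix.neg_mulVec, dotProduct_neg, h2]
  have e2 : -(starRingEnd ℂ s) + dd = μ * ny := by
    have h := congrArg (fun w => star y ⬝ᵥ w) E2
    simp only [dotProduct_add, dotProduct_smul, smul_eq_mul] at h
    rw [hcs] at h
    exact h
  -- basic positivity facts
  have hnxim : nx.im = 0 := (dp_star_im x).1
  have hnxre : 0 ≤ nx.re := (dp_star_im x).2
  have hnyim : ny.im = 0 := (dp_star_im y).1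
  have hnyre : 0 ≤ ny.re := (dp_star_im y).2
  have hsum : star v ⬝ᵥ v = nx + ny := by
    rw [hnx, hny]
    simp [dotProduct, Fintype.sum_sum_type, hx, hy]
  have hvpos : 0 < nx.re + ny.re := by
    have h := Matrix.dotProduct_star_self_pos_iff.mpr hv0
    rw [Complex.lt_def] at h
    have h1 := h.1
    rw [hsum] at h1
    simpa using h1
  have haim : a.im = 0 := by
    rcases hsep with ⟨hlt, hδ⟩ | ⟨hlt, hδ⟩
    · exact (quad_lower hA (fun i => ciInf_le (Finite.bddBelow_range _) i) x).1
    · exact (quad_upper hA (fun i => le_ciSup (Finite.bddAbove_range _) i) x).1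
  have hdim : dd.im = 0 := by
    rcases hsep with ⟨hlt, hδ⟩ | ⟨hlt, hδ⟩
    · exact (quad_upper hD (fun i => le_ciSup (Finite.bddAbove_range _) i) y).1
    · exact (quad_lower hD (fun i => ciInf_le (Finite.bddBelow_range _) i) y).1
  -- imaginary parts of the two block equations
  have him1 : s.im = μ.im * nx.re := by
    have h := congrArg Complex.im e1
    simp only [Complex.add_im, Complex.mul_im, haim, hnxim, mul_zero, add_zero, zero_add] at h
    exact h
  have him2 : s.im = μ.im * ny.re := by
    have h := congrArg Complex.im e2
    simp only [Complex.add_im, Complex.neg_im, Complex.conj_im, Complex.mul_im, hdim, hnyim,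
      mul_zero, add_zero, neg_neg, zero_add] at h
    exact h
  have hteq : nx.re = ny.re := mul_left_cancel₀ him (him1.symm.trans him2)
  have htpos : 0 < nx.re := by linarith
  -- real parts
  have hre1 : a.re + s.re = μ.re * nx.re := by
    have h := congrArg Complex.re e1
    simp only [Complex.add_re, Complex.mul_re, hnxim, mul_zero, sub_zero] at h
    exact h
  have hre2 : dd.re - s.re = μ.re * nx.re := by
    have h := congrArg Complex.re e2
    simp only [Complex.add_re, Complex.neg_re, Complex.conj_re, Complex.mul_re, hnyim,
      mul_zero, sub_zero] at h
    rw [← hteq] at h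
    linarith
  -- the Cauchy–Schwarz bound on s
  have hzb : s.re ^ 2 + s.im ^ 2 ≤ nx.re * ((δ / 2) ^ 2 * nx.re) := by
    have h := z_bound hZ x y
    rw [Complex.sq_norm, Complex.normSq_apply] at h
    calc s.re ^ 2 + s.im ^ 2 = s.re * s.re + s.im * s.im := by ring
      _ ≤ nx.re * ((δ / 2) ^ 2 * ny.re) := h
      _ = nx.re * ((δ / 2) ^ 2 * nx.re) := by rw [← hteq]
  have hμsq : 0 < μ.im * μ.im := mul_self_pos.mpr him
  -- case analysis on the separation hypothesis
  rcases hsep with ⟨hlt, hδ⟩ | ⟨hlt, hδ⟩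
  · have hal : lamMin hA * nx.re ≤ a.re :=
      (quad_lower hA (fun i => ciInf_le (Finite.bddBelow_range _) i) x).2
    have hdu : dd.re ≤ lamMax hD * nx.re := by
      have h := (quad_upper hD (fun i => le_ciSup (Finite.bddAbove_range _) i) y).2
      rw [← hteq] at h
      exact h
    have h2s : 2 * s.re ≤ -(δ * nx.re) := by
      have hgap : δ * nx.re ≤ a.re - dd.re := by
        rw [hδ]
        nlinarith
      linarith
    have h4 := mul_self_le_mul_self (le_of_lt (mul_pos hδpos htpos))
      (by linarith : δ * nx.re ≤ -(2 * s.re))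
    have hsim0 : s.im ^ 2 ≤ 0 := by nlinarith
    have hne : s.im ≠ 0 := by
      rw [him1]
      exact mul_ne_zero him (ne_of_gt htpos)
    exact absurd (le_antisymm hsim0 (sq_nonneg s.im)) (pow_ne_zero 2 hne)
  · have hau : a.re ≤ lamMax hA * nx.re :=
      (quad_upper hA (fun i => le_ciSup (Finite.bddAbove_range _) i) x).2
    have hdl : lamMin hD * nx.re ≤ dd.re := by
      have h := (quad_lower hD (fun i => ciInf_le (Finite.bddBelow_range _) i) y).2
      rw [← hteq] at h
      exact h
    have h2s : δ * nx.re ≤ 2 * s.re := by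
      have hgap : δ * nx.re ≤ dd.re - a.re := by
        rw [hδ]
        nlinarith
      linarith
    have h4 := mul_self_le_mul_self (le_of_lt (mul_pos hδpos htpos))
      (by linarith : δ * nx.re ≤ 2 * s.re)
    have hsim0 : s.im ^ 2 ≤ 0 := by nlinarith
    have hne : s.im ≠ 0 := by
      rw [him1]
      exact mul_ne_zero him (ne_of_gt htpos)
    exact absurd (le_antisymm hsim0 (sq_nonneg s.im)) (pow_ne_zero 2 hne)
end Aux
end

section
/- Let d₁, d₂ be positive integers, A a d₁×d₁ real symmetric matrix, D a d₂×d₂ real symmetric matrix, Z a d₁×d₂ real matrix, and J = [[A, Z], [−Zᵀ, D]]. Suppose the spectra of A and D are separated, i.e., either λmax(D) < λmin(A) with gap δ = λmin(A) − λmax(D), or λmax(A) < λmin(D) with gap δ = λmin(D) − λmax(A). If ‖Z‖ > δ/2, then every non-real eigenvalue μ of J satisfies |Im(μ)| ≤ √(‖Z‖² − δ²/4). -/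
open Matrix

/- ### Auxiliary lemmas -/

theorem aux_ev_exists {n : Type*} [Fintype n] [DecidableEq n]
    (M : Matrix n n ℂ) (μ : ℂ) (h : μ ∈ spectrum ℂ M) :
    ∃ v : n → ℂ, v ≠ 0 ∧ M *ᵥ v = μ • v := by
  rw [← AlgEquiv.spectrum_eq (Matrix.toLinAlgEquiv' (R := ℂ) (n := n)),
    ← Module.End.hasEigenvalue_iff_mem_spectrum] at h
  obtain ⟨v, hv⟩ := h.exists_hasEigenvector
  refine ⟨v, hv.2, ?_⟩
  have := hv.apply_eq_smul
  rwa [Matrix.toLinAlgEquiv'_apply] at this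

theorem aux_star_dot_self {n : Type*} [Fintype n] (w : n → ℂ) :
    star w ⬝ᵥ w = ((∑ i, Complex.normSq (w i) : ℝ) : ℂ) := by
  simp only [dotProduct, Pi.star_apply, Complex.star_def]
  push_cast
  congr 1; ext i
  rw [Complex.normSq_eq_conj_mul_self]

theorem aux_quad_real {d : ℕ} [NeZero d] {A : Matrix (Fin d) (Fin d) ℝ} (hA : A.IsHermitian)
    (x : Fin d → ℂ) :
    ∃ q : ℝ, star x ⬝ᵥ (A.map (algebraMap ℝ ℂ)) *ᵥ x = (q : ℂ) ∧
      lamMin hA * (∑ i, Complex.normSq (x i)) ≤ q ∧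
      q ≤ lamMax hA * (∑ i, Complex.normSq (x i)) := by
  classical
  set f : ℝ →+* ℂ := algebraMap ℝ ℂ with hf
  set U : Matrix (Fin d) (Fin d) ℝ := (hA.eigenvectorUnitary : Matrix (Fin d) (Fin d) ℝ) with hU
  set V : Matrix (Fin d) (Fin d) ℂ := U.map f with hV
  have hstar : (star U).map f = Vᴴ := by
    ext i j
    simp [hV, conjTranspose_apply, Matrix.map_apply, Complex.conj_ofReal, hf]
  have hVV : Vᴴ * V = 1 := by
    rw [← hstar, hV, ← Matrix.map_mul, Unitary.coe_star_mul_self,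
      Matrix.map_one f f.map_zero f.map_one]
  have hVV' : V * Vᴴ = 1 := mul_eq_one_comm.mp hVV
  have hAmap : A.map f = V * diagonal (fun i => ((hA.eigenvalues i : ℝ) : ℂ)) * Vᴴ := by
    conv_lhs => rw [hA.spectral_theorem, Unitary.conjStarAlgAut_apply]
    rw [Matrix.map_mul, Matrix.map_mul, hstar, Matrix.diagonal_map f.map_zero]
    congr 1
  set y : Fin d → ℂ := Vᴴ *ᵥ x with hy
  have hstary : star y = star x ᵥ* V := by
    rw [hy, star_mulVec, conjTranspose_conjTranspose]
  have hq : star x ⬝ᵥ (A.map f) *ᵥ x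
      = ∑ i, (hA.eigenvalues i : ℂ) * Complex.normSq (y i) := by
    rw [hAmap, ← mulVec_mulVec, ← mulVec_mulVec, dotProduct_mulVec, ← hstary]
    simp only [dotProduct, mulVec_diagonal, ← hy]
    congr 1; ext i
    have : (star y) i * ((hA.eigenvalues i : ℂ) * y i)
        = (hA.eigenvalues i : ℂ) * ((starRingEnd ℂ) (y i) * y i) := by
      simp [Pi.star_apply, Complex.star_def]; ring
    rw [this, Complex.normSq_eq_conj_mul_self]
  have hnorm : ∑ i, Complex.normSq (y i) = ∑ i, Complex.normSq (x i) := by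
    have h1 : star y ⬝ᵥ y = star x ⬝ᵥ x := by
      rw [hstary, hy, ← dotProduct_mulVec, mulVec_mulVec, hVV', one_mulVec]
    have := aux_star_dot_self y
    rw [h1, aux_star_dot_self x] at this
    exact_mod_cast this.symm
  refine ⟨∑ i, hA.eigenvalues i * Complex.normSq (y i), ?_, ?_, ?_⟩
  · rw [hq]; push_cast; rfl
  · rw [← hnorm, lamMin, Finset.mul_sum]
    apply Finset.sum_le_sum
    intro i _
    exact mul_le_mul_of_nonneg_right (ciInf_le (Finite.bddBelow_range _) i)
      (Complex.normSq_nonneg _)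
  · rw [← hnorm, lamMax, Finset.mul_sum]
    apply Finset.sum_le_sum
    intro i _
    exact mul_le_mul_of_nonneg_right (le_ciSup (Finite.bddAbove_range _) i)
      (Complex.normSq_nonneg _)

theorem aux_l2OpNorm_nonneg {m n : ℕ} (Z : Matrix (Fin m) (Fin n) ℝ) : 0 ≤ l2OpNorm Z :=
  norm_nonneg _

theorem aux_mulVec_sq_bound {m n : ℕ} (Z : Matrix (Fin m) (Fin n) ℝ) (u : Fin n → ℝ) :
    ∑ i, ((Z *ᵥ u) i) ^ 2 ≤ (l2OpNorm Z) ^ 2 * ∑ j, (u j) ^ 2 := by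
  set L := LinearMap.toContinuousLinearMap (Matrix.toEuclideanLin Z)
  set u' : EuclideanSpace ℝ (Fin n) := (WithLp.equiv 2 (Fin n → ℝ)).symm u
  have hle : ‖L u'‖ ≤ l2OpNorm Z * ‖u'‖ := L.le_opNorm u'
  have h1 : ‖L u'‖ ^ 2 = ∑ i, ((Z *ᵥ u) i) ^ 2 := by
    have : L u' = (WithLp.equiv 2 (Fin m → ℝ)).symm (Z *ᵥ u) := rfl
    rw [this, EuclideanSpace.norm_eq, Real.sq_sqrt (by positivity)]
    simp [Real.norm_eq_abs, sq_abs]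
  have h2 : ‖u'‖ ^ 2 = ∑ j, (u j) ^ 2 := by
    rw [EuclideanSpace.norm_eq, Real.sq_sqrt (by positivity)]
    simp [Real.norm_eq_abs, sq_abs, u']
  calc ∑ i, ((Z *ᵥ u) i) ^ 2 = ‖L u'‖ ^ 2 := h1.symm
    _ ≤ (l2OpNorm Z * ‖u'‖) ^ 2 := by
        apply sq_le_sq' _ hle
        nlinarith [norm_nonneg (L u'), norm_nonneg u', aux_l2OpNorm_nonneg Z]
    _ = (l2OpNorm Z) ^ 2 * ∑ j, (u j) ^ 2 := by rw [mul_pow, h2]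

theorem aux_mulVec_c_sq_bound {m n : ℕ} (Z : Matrix (Fin m) (Fin n) ℝ) (y : Fin n → ℂ) :
    ∑ i, Complex.normSq (((Z.map (algebraMap ℝ ℂ)) *ᵥ y) i) ≤
      (l2OpNorm Z) ^ 2 * ∑ j, Complex.normSq (y j) := by
  set u : Fin n → ℝ := fun j => (y j).re
  set w : Fin n → ℝ := fun j => (y j).im
  have hre : ∀ i, ((Z.map (algebraMap ℝ ℂ) *ᵥ y) i).re = (Z *ᵥ u) i := by
    intro i; simp [mulVec, dotProduct, Complex.re_sum, u]
  have him : ∀ i, ((Z.map (algebraMap ℝ ℂ) *ᵥ y) i).im = (Z *ᵥ w) i := by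
    intro i; simp [mulVec, dotProduct, Complex.im_sum, w]
  have key : ∑ i, Complex.normSq ((Z.map (algebraMap ℝ ℂ) *ᵥ y) i)
      = (∑ i, ((Z *ᵥ u) i) ^ 2) + ∑ i, ((Z *ᵥ w) i) ^ 2 := by
    rw [← Finset.sum_add_distrib]
    congr 1; ext i
    rw [Complex.normSq_apply, hre, him]; ring
  have key2 : ∑ j, Complex.normSq (y j) = (∑ j, (u j) ^ 2) + ∑ j, (w j) ^ 2 := by
    rw [← Finset.sum_add_distrib]
    congr 1; ext j
    rw [Complex.normSq_apply]; ring
  rw [key, key2, mul_add]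
  exact add_le_add (aux_mulVec_sq_bound Z u) (aux_mulVec_sq_bound Z w)

theorem aux_dot_Z_bound {m n : ℕ} (Z : Matrix (Fin m) (Fin n) ℝ) (x : Fin m → ℂ) (y : Fin n → ℂ) :
    ‖star x ⬝ᵥ (Z.map (algebraMap ℝ ℂ)) *ᵥ y‖ ≤
      l2OpNorm Z * (Real.sqrt (∑ i, Complex.normSq (x i)) *
        Real.sqrt (∑ j, Complex.normSq (y j))) := by
  set v : Fin m → ℂ := (Z.map (algebraMap ℝ ℂ)) *ᵥ y
  have hcs : ‖star x ⬝ᵥ v‖ ≤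
      Real.sqrt (∑ i, Complex.normSq (x i)) * Real.sqrt (∑ i, Complex.normSq (v i)) := by
    have := norm_inner_le_norm (𝕜 := ℂ) ((WithLp.equiv 2 (Fin m → ℂ)).symm x)
      ((WithLp.equiv 2 (Fin m → ℂ)).symm v)
    rw [show inner ℂ ((WithLp.equiv 2 (Fin m → ℂ)).symm x) ((WithLp.equiv 2 (Fin m → ℂ)).symm v)
        = star x ⬝ᵥ v from dotProduct_comm _ _] at this
    rw [EuclideanSpace.norm_eq, EuclideanSpace.norm_eq] at this
    simpa [Complex.sq_norm] using this
  have hv : Real.sqrt (∑ i, Complex.normSq (v i)) ≤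
      l2OpNorm Z * Real.sqrt (∑ j, Complex.normSq (y j)) := by
    have := Real.sqrt_le_sqrt (aux_mulVec_c_sq_bound Z y)
    rwa [Real.sqrt_mul (by positivity), Real.sqrt_sq (aux_l2OpNorm_nonneg Z)] at this
  calc ‖star x ⬝ᵥ v‖
      ≤ Real.sqrt (∑ i, Complex.normSq (x i)) * Real.sqrt (∑ i, Complex.normSq (v i)) := hcs
    _ ≤ Real.sqrt (∑ i, Complex.normSq (x i)) *
        (l2OpNorm Z * Real.sqrt (∑ j, Complex.normSq (y j))) :=
        mul_le_mul_of_nonneg_left hv (Real.sqrt_nonneg _)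
    _ = _ := by ring

theorem aux_conj_dot {m n : Type*} [Fintype m] [Fintype n]
    (M : Matrix m n ℂ) (x : m → ℂ) (y : n → ℂ) :
    star y ⬝ᵥ (Mᴴ *ᵥ x) = (starRingEnd ℂ) (star x ⬝ᵥ (M *ᵥ y)) := by
  rw [dotProduct_mulVec, ← star_mulVec, star_dotProduct]
  simp

theorem stmt3 {d₁ d₂ : ℕ} (hd₁ : 0 < d₁) (hd₂ : 0 < d₂)
    (A : Matrix (Fin d₁) (Fin d₁) ℝ) (D : Matrix (Fin d₂) (Fin d₂) ℝ)
    (Z : Matrix (Fin d₁) (Fin d₂) ℝ)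
    (hA : A.IsHermitian) (hD : D.IsHermitian)
    (δ : ℝ)
    (hsep : (lamMax hD < lamMin hA ∧ δ = lamMin hA - lamMax hD) ∨
            (lamMax hA < lamMin hD ∧ δ = lamMin hD - lamMax hA))
    (hZ : l2OpNorm Z > δ / 2) :
    ∀ μ ∈ spectrum ℂ ((Matrix.fromBlocks A Z (-Zᵀ) D).map (algebraMap ℝ ℂ)), μ.im ≠ 0 →
      |μ.im| ≤ Real.sqrt ((l2OpNorm Z) ^ 2 - δ ^ 2 / 4) := by
  intro μ hμ him
  haveI : NeZero d₁ := ⟨hd₁.ne'⟩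
  haveI : NeZero d₂ := ⟨hd₂.ne'⟩
  set f : ℝ →+* ℂ := algebraMap ℝ ℂ with hf
  obtain ⟨v, hv0, hveq⟩ := aux_ev_exists _ μ hμ
  set x : Fin d₁ → ℂ := v ∘ Sum.inl with hx
  set y : Fin d₂ → ℂ := v ∘ Sum.inr with hyy
  rw [show (Matrix.fromBlocks A Z (-Zᵀ) D).map f
      = fromBlocks (A.map f) (Z.map f) ((-Zᵀ).map f) (D.map f) from fromBlocks_map A Z (-Zᵀ) D f,
    fromBlocks_mulVec] at hveq
  have heq1 : A.map f *ᵥ x + Z.map f *ᵥ y = μ • x := by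
    funext i; exact congrFun hveq (Sum.inl i)
  have heq2 : (-Zᵀ).map f *ᵥ x + D.map f *ᵥ y = μ • y := by
    funext i; exact congrFun hveq (Sum.inr i)
  set sx : ℝ := ∑ i, Complex.normSq (x i) with hsx
  set sy : ℝ := ∑ i, Complex.normSq (y i) with hsy
  set z : ℂ := star x ⬝ᵥ (Z.map f) *ᵥ y with hz
  obtain ⟨qA, hqA, hqAlo, hqAhi⟩ := aux_quad_real hA x
  rw [← hf] at hqA
  obtain ⟨qD, hqD, hqDlo, hqDhi⟩ := aux_quad_real hD y
  rw [← hf] at hqD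
  rw [← hsx] at hqAlo hqAhi
  rw [← hsy] at hqDlo hqDhi
  -- first scalar equation
  have e1 : (qA : ℂ) + z = μ * sx := by
    have := congrArg (fun w => star x ⬝ᵥ w) heq1
    simpa only [dotProduct_add, dotProduct_smul, smul_eq_mul, hqA, ← hz,
      aux_star_dot_self x, ← hsx] using this
  -- second scalar equation
  have hzt : star y ⬝ᵥ ((-Zᵀ).map f *ᵥ x) = -(starRingEnd ℂ) z := by
    have hZc : (-Zᵀ).map f = -((Z.map f)ᴴ) := by
      ext i j
      simp [Matrix.map_apply, conjTranspose_apply, Complex.conj_ofReal, hf]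
    rw [hZc, neg_mulVec, dotProduct_neg, aux_conj_dot, ← hz]
  have e2 : -(starRingEnd ℂ) z + (qD : ℂ) = μ * sy := by
    have := congrArg (fun w => star y ⬝ᵥ w) heq2
    simpa only [dotProduct_add, dotProduct_smul, smul_eq_mul, hqD, hzt,
      aux_star_dot_self y, ← hsy] using this
  -- norm bound on z (raw form)
  have habs0 : ‖z‖ ≤ l2OpNorm Z * (Real.sqrt sx * Real.sqrt sy) := by
    have := aux_dot_Z_bound Z x y
    rwa [← hz, ← hsx, ← hsy] at this
  clear_value z sx sy
  -- imaginary parts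
  have e1im : z.im = μ.im * sx := by
    have := congrArg Complex.im e1
    simpa using this
  have e2im : z.im = μ.im * sy := by
    have := congrArg Complex.im e2
    simpa using this
  have hsxy : sx = sy := mul_left_cancel₀ him (by rw [← e1im, ← e2im])
  -- positivity of sx
  have hsx_nonneg : 0 ≤ sx := hsx ▸ Finset.sum_nonneg fun i _ => Complex.normSq_nonneg _
  have hsx_pos : 0 < sx := by
    rcases hsx_nonneg.lt_or_eq with h | h
    · exact h
    · exfalso
      apply hv0
      funext i
      cases i with
      | inl i =>
          have hx0 := (Finset.sum_eq_zero_iff_of_nonneg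
            (fun j _ => Complex.normSq_nonneg (x j))).mp (by rw [← hsx, ← h]) i
            (Finset.mem_univ i)
          exact Complex.normSq_eq_zero.mp hx0
      | inr i =>
          have hy0 := (Finset.sum_eq_zero_iff_of_nonneg
            (fun j _ => Complex.normSq_nonneg (y j))).mp (by rw [← hsy, ← hsxy, ← h]) i
            (Finset.mem_univ i)
          exact Complex.normSq_eq_zero.mp hy0
  -- real parts
  have e1re : qA + z.re = μ.re * sx := by
    have := congrArg Complex.re e1
    simpa using this
  have e2re : -z.re + qD = μ.re * sy := by
    have := congrArg Complex.re e2
    simpa using this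
  have hdiff : qD - qA = 2 * z.re := by
    rw [← hsxy] at e2re
    linarith
  rw [← hsxy] at hqDlo hqDhi
  -- gap bound on z.re
  have hzre : δ ^ 2 * sx ^ 2 / 4 ≤ z.re ^ 2 := by
    rcases hsep with ⟨hlt, hδ⟩ | ⟨hlt, hδ⟩
    · have hδpos : 0 < δ := by rw [hδ]; linarith
      subst hδ
      have hzr : (lamMin hA - lamMax hD) * sx / 2 ≤ -z.re := by
        have h1 := hqDhi
        have h2 := hqAlo
        linarith
      have hnn : 0 ≤ (lamMin hA - lamMax hD) * sx / 2 := by positivity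
      have hp := pow_le_pow_left₀ hnn hzr 2
      have h3 : ((lamMin hA - lamMax hD) * sx / 2) ^ 2
          = (lamMin hA - lamMax hD) ^ 2 * sx ^ 2 / 4 := by ring
      have h4 : (-z.re) ^ 2 = z.re ^ 2 := by ring
      linarith
    · have hδpos : 0 < δ := by rw [hδ]; linarith
      subst hδ
      have hzr : (lamMin hD - lamMax hA) * sx / 2 ≤ z.re := by
        have h1 := hqDlo
        have h2 := hqAhi
        linarith
      have hnn : 0 ≤ (lamMin hD - lamMax hA) * sx / 2 := by positivity
      have hp := pow_le_pow_left₀ hnn hzr 2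
      have h3 : ((lamMin hD - lamMax hA) * sx / 2) ^ 2
          = (lamMin hD - lamMax hA) ^ 2 * sx ^ 2 / 4 := by ring
      linarith
  -- norm bound
  have habs : ‖z‖ ≤ l2OpNorm Z * sx := by
    rw [← hsxy, Real.mul_self_sqrt hsx_nonneg] at habs0
    exact habs0
  have habs2 : z.re ^ 2 + z.im ^ 2 ≤ (l2OpNorm Z) ^ 2 * sx ^ 2 := by
    have h0 : z.re ^ 2 + z.im ^ 2 = ‖z‖ ^ 2 := by
      rw [Complex.sq_norm, Complex.normSq_apply]; ring
    have h1 := pow_le_pow_left₀ (norm_nonneg z) habs 2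
    rw [mul_pow] at h1
    linarith
  have hfinal : μ.im ^ 2 ≤ (l2OpNorm Z) ^ 2 - δ ^ 2 / 4 := by
    have hz2 : z.im ^ 2 = μ.im ^ 2 * sx ^ 2 := by rw [e1im]; ring
    have hkey : μ.im ^ 2 * sx ^ 2 ≤ ((l2OpNorm Z) ^ 2 - δ ^ 2 / 4) * sx ^ 2 := by
      have hexp : ((l2OpNorm Z) ^ 2 - δ ^ 2 / 4) * sx ^ 2
          = (l2OpNorm Z) ^ 2 * sx ^ 2 - δ ^ 2 * sx ^ 2 / 4 := by ring
      linarith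
    have hs2 : 0 < sx ^ 2 := pow_pos hsx_pos 2
    exact le_of_mul_le_mul_right hkey hs2
  calc |μ.im| = Real.sqrt (μ.im ^ 2) := (Real.sqrt_sq_eq_abs _).symm
    _ ≤ Real.sqrt ((l2OpNorm Z) ^ 2 - δ ^ 2 / 4) := Real.sqrt_le_sqrt hfinal
end

section
/- Let d₁, d₂ be positive integers, A a d₁×d₁ real symmetric negative definite matrix, D a d₂×d₂ real symmetric negative definite matrix, and Z an arbitrary d₁×d₂ real matrix. Then the block matrix J = [[A, Z], [−Zᵀ, D]] is Hurwitz: every eigenvalue of J has strictly negative real part. -/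
open Matrix
open scoped ComplexOrder

lemma aux_re_pos {n : Type*} [Fintype n] [DecidableEq n] {P : Matrix n n ℝ} (hP : P.PosDef)
    {x : n → ℂ} (hx : x ≠ 0) :
    0 < (star x ⬝ᵥ (P.map (algebraMap ℝ ℂ)) *ᵥ x).re := by
  obtain ⟨B, hB⟩ : ∃ B : Matrix n n ℝ, P = Bᴴ * B := by
    open scoped MatrixOrder in
    exact CStarAlgebra.nonneg_iff_eq_star_mul_self.mp hP.posSemidef.nonneg
  have hdet : B.det ≠ 0 := by
    intro h
    have hpos := hP.det_pos
    rw [hB, det_mul, det_conjTranspose, h, star_zero, zero_mul] at hpos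
    exact lt_irrefl _ hpos
  set f := algebraMap ℝ ℂ with hf
  have hmap : P.map f = (B.map f)ᴴ * B.map f := by
    ext i j
    simp [hB, Matrix.mul_apply, Matrix.map_apply, conjTranspose_apply, map_sum, hf,
      Complex.conj_ofReal]
  have hdetc : (B.map f).det ≠ 0 := by
    have : (B.map f).det = f B.det := (RingHom.map_det f B).symm
    rw [this]
    simpa [hf] using hdet
  have hBx : (B.map f) *ᵥ x ≠ 0 := by
    have hinj : Function.Injective ((B.map f).mulVec) :=
      mulVec_injective_iff_isUnit.2 ((isUnit_iff_isUnit_det _).2 (isUnit_iff_ne_zero.2 hdetc))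
    intro h
    exact hx (hinj (by simpa using h))
  have key : star x ⬝ᵥ (P.map f) *ᵥ x = star ((B.map f) *ᵥ x) ⬝ᵥ ((B.map f) *ᵥ x) := by
    rw [hmap, ← mulVec_mulVec, dotProduct_mulVec, star_mulVec]
  rw [key]
  exact (Complex.lt_def.mp (dotProduct_star_self_pos_iff.mpr hBx)).1

lemma aux_fromBlocks_posDef {d₁ d₂ : ℕ} {A : Matrix (Fin d₁) (Fin d₁) ℝ}
    {D : Matrix (Fin d₂) (Fin d₂) ℝ} (hA : A.PosDef) (hD : D.PosDef) :
    (fromBlocks A 0 0 D).PosDef := by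
  refine posDef_iff_dotProduct_mulVec.mpr ⟨?_, ?_⟩
  · have hA1 := hA.1
    have hD1 := hD.1
    unfold Matrix.IsHermitian at *
    rw [fromBlocks_conjTranspose, hA1, hD1]
    simp
  · intro x hx
    have hxe : x = Sum.elim (x ∘ Sum.inl) (x ∘ Sum.inr) := (Sum.elim_comp_inl_inr x).symm
    rw [hxe, fromBlocks_mulVec]
    have hstar : star x = x := star_trivial x
    rw [← hxe, hstar, hxe]
    simp only [zero_mulVec, add_zero, zero_add]
    simp only [Sum.elim_comp_inl, Sum.elim_comp_inr]
    rw [sumElim_dotProduct_sumElim]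
    rcases eq_or_ne (x ∘ Sum.inl) 0 with h1 | h1
    · have h2 : x ∘ Sum.inr ≠ 0 := by
        intro h2
        apply hx
        ext (i | i)
        · exact congrFun h1 i
        · exact congrFun h2 i
      have := hD.dotProduct_mulVec_pos h2
      have hA2 := hA.posSemidef.dotProduct_mulVec_nonneg (x ∘ Sum.inl)
      rw [star_trivial] at this hA2
      linarith
    · have := hA.dotProduct_mulVec_pos h1
      have hD2 := hD.posSemidef.dotProduct_mulVec_nonneg (x ∘ Sum.inr)
      rw [star_trivial] at this hD2
      linarith

theorem stmt4 {d₁ d₂ : ℕ} (hd₁ : 0 < d₁) (hd₂ : 0 < d₂)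
    (A : Matrix (Fin d₁) (Fin d₁) ℝ) (D : Matrix (Fin d₂) (Fin d₂) ℝ)
    (Z : Matrix (Fin d₁) (Fin d₂) ℝ)
    (hA : (-A).PosDef) (hD : (-D).PosDef) :
    ∀ μ ∈ spectrum ℂ ((Matrix.fromBlocks A Z (-Zᵀ) D).map (algebraMap ℝ ℂ)), μ.re < 0 := by
  intro μ hμ
  set f := algebraMap ℝ ℂ with hf
  set J : Matrix (Fin d₁ ⊕ Fin d₂) (Fin d₁ ⊕ Fin d₂) ℝ := fromBlocks A Z (-Zᵀ) D with hJ
  set M := J.map f with hM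
  -- obtain an eigenvector
  have hnu : ¬ IsUnit (algebraMap ℂ (Matrix (Fin d₁ ⊕ Fin d₂) (Fin d₁ ⊕ Fin d₂) ℂ) μ - M) :=
    spectrum.mem_iff.mp hμ
  have hdet0 : (algebraMap ℂ (Matrix (Fin d₁ ⊕ Fin d₂) (Fin d₁ ⊕ Fin d₂) ℂ) μ - M).det = 0 := by
    by_contra h
    exact hnu ((Matrix.isUnit_iff_isUnit_det _).mpr (isUnit_iff_ne_zero.mpr h))
  obtain ⟨v, hv0, hv⟩ := Matrix.exists_mulVec_eq_zero_iff.mpr hdet0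
  have heig : M *ᵥ v = μ • v := by
    rw [sub_mulVec, sub_eq_zero] at hv
    rw [← hv, Algebra.algebraMap_eq_smul_one, smul_mulVec, one_mulVec]
  -- the quadratic form
  set c : ℂ := star v ⬝ᵥ M *ᵥ v with hc
  set r : ℂ := star v ⬝ᵥ v with hr
  have hcr : c = μ * r := by rw [hc, heig, dotProduct_smul, hr, smul_eq_mul]
  have hrpos : 0 < r.re ∧ r.im = 0 := by
    have := dotProduct_star_self_pos_iff.mpr hv0
    exact ⟨(Complex.lt_def.mp this).1, ((Complex.lt_def.mp this).2).symm⟩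
  -- Hermitian part
  have hAsymm : Aᵀ = A := by
    have h := hA.1
    unfold Matrix.IsHermitian at h
    have : Aᴴ = A := by
      have := congrArg Neg.neg h
      simpa using this
    ext i j
    have h2 := congrFun (congrFun this i) j
    simpa [conjTranspose_apply] using h2
  have hDsymm : Dᵀ = D := by
    have h := hD.1
    unfold Matrix.IsHermitian at h
    have : Dᴴ = D := by
      have := congrArg Neg.neg h
      simpa using this
    ext i j
    have h2 := congrFun (congrFun this i) j
    simpa [conjTranspose_apply] using h2
  set Q : Matrix (Fin d₁ ⊕ Fin d₂) (Fin d₁ ⊕ Fin d₂) ℝ := fromBlocks (-A) 0 0 (-D) with hQ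
  have hQpd : Q.PosDef := aux_fromBlocks_posDef hA hD
  have hJJ : J + Jᵀ = (-Q) + (-Q) := by
    rw [hJ, hQ, fromBlocks_transpose, fromBlocks_add, fromBlocks_neg, fromBlocks_add,
      hAsymm, hDsymm, transpose_neg, transpose_transpose]
    simp
  have hMH : Mᴴ = Jᵀ.map f := by
    rw [hM]; ext i j; simp [conjTranspose_apply, Matrix.map_apply, hf, Complex.conj_ofReal]
  have hstarc : star c = star v ⬝ᵥ Mᴴ *ᵥ v := by
    rw [hc, star_dotProduct, star_star, star_mulVec, ← dotProduct_mulVec]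
  -- compute c + star c
  set q : ℂ := star v ⬝ᵥ (Q.map f) *ᵥ v with hq
  have hqpos : 0 < q.re := aux_re_pos hQpd hv0
  have hsum : c + star c = -q + -q := by
    rw [hc, hstarc, hMH, ← dotProduct_add, ← add_mulVec]
    have : M + Jᵀ.map f = (J + Jᵀ).map f := by
      rw [hM]; ext i j; simp [Matrix.map_apply]
    rw [this, hJJ]
    have hneg : ((-Q : Matrix _ _ ℝ) + -Q).map f = (-(Q.map f)) + (-(Q.map f)) := by
      ext i j; simp [Matrix.map_apply]
    rw [hneg, add_mulVec, dotProduct_add, neg_mulVec, dotProduct_neg, hq]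
  have hcre : c.re < 0 := by
    have h1 : (c + star c).re = 2 * c.re := by
      simp [Complex.add_re, Complex.star_def, Complex.conj_re]; ring
    have h2 : (c + star c).re = -q.re + -q.re := by rw [hsum]; simp
    nlinarith
  have : c.re = μ.re * r.re := by
    rw [hcr, Complex.mul_re, hrpos.2]; ring
  nlinarith [hrpos.1]
end

section
/- Let d₁, d₂ be positive integers, A a d₁×d₁ real symmetric matrix, D a d₂×d₂ real symmetric matrix, and P a d₁×d₂ real matrix, and let J be the real symmetric block matrix J = [[A, P], [Pᵀ, D]]. Assume λmin(A) ≠ λmin(D) and set λ⁻ = min(λmin(A), λmin(D)) and δ⁻ = ‖P‖ · tan(½ · arctan(2‖P‖ / |λmin(A) − λmin(D)|)). Then all eigenvalues of J are real and λ⁻ − δ⁻ ≤ λmin(J) ≤ λ⁻. -/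
open Matrix

lemma tan_half_arctan' (y : ℝ) :
    Real.tan ((1/2) * Real.arctan y) = y / (Real.sqrt (1 + y ^ 2) + 1) := by
  have hθ := Real.arctan_mem_Ioo y
  set θ := Real.arctan y with hθdef
  have hc : 0 < Real.cos (θ / 2) := by
    apply Real.cos_pos_of_mem_Ioo
    constructor <;> [nlinarith [hθ.1, Real.pi_pos]; nlinarith [hθ.2, Real.pi_pos]]
  have h1 : Real.sin θ = 2 * Real.sin (θ/2) * Real.cos (θ/2) := by
    rw [← Real.sin_two_mul]; ring_nf
  have h2 : 1 + Real.cos θ = 2 * Real.cos (θ/2) ^ 2 := by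
    have := Real.cos_sq (θ/2)
    rw [show 2*(θ/2) = θ by ring] at this
    nlinarith [this]
  have hs : Real.sin θ = y / Real.sqrt (1 + y ^ 2) := Real.sin_arctan y
  have hcθ : Real.cos θ = 1 / Real.sqrt (1 + y ^ 2) := Real.cos_arctan y
  have hsq : (0:ℝ) < Real.sqrt (1 + y ^ 2) := Real.sqrt_pos.mpr (by positivity)
  have ht : Real.tan ((1/2) * θ) = Real.sin (θ/2) / Real.cos (θ/2) := by
    rw [show (1/2) * θ = θ/2 by ring, Real.tan_eq_sin_div_cos]
  rw [ht]
  have key : Real.sin (θ/2) / Real.cos (θ/2) = Real.sin θ / (1 + Real.cos θ) := by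
    rw [h1, h2]; field_simp
  rw [key, hs, hcθ]
  field_simp

lemma exists_min_eigvec {n : Type*} [Fintype n] [DecidableEq n] [Nonempty n]
    {M : Matrix n n ℝ} (hM : M.IsHermitian) :
    ∃ v : n → ℝ, v ⬝ᵥ v = 1 ∧ M *ᵥ v = lamMin hM • v := by
  obtain ⟨i, hi⟩ := exists_eq_ciInf_of_finite (f := hM.eigenvalues)
  refine ⟨⇑(hM.eigenvectorBasis i), ?_, ?_⟩
  · have h := hM.eigenvectorBasis.orthonormal.1 i
    have h2 : (inner ℝ (hM.eigenvectorBasis i) (hM.eigenvectorBasis i) : ℝ) = 1 := by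
      rw [real_inner_self_eq_norm_sq, h]; norm_num
    simp only [PiLp.inner_apply, RCLike.inner_apply, conj_trivial] at h2
    simpa [dotProduct] using h2
  · rw [hM.mulVec_eigenvectorBasis, show lamMin hM = hM.eigenvalues i from hi.symm]

lemma lamMin_rayleigh_le {n : Type*} [Fintype n] [DecidableEq n] [Nonempty n]
    {M : Matrix n n ℝ} (hM : M.IsHermitian) (x : n → ℝ) :
    lamMin hM * (x ⬝ᵥ x) ≤ x ⬝ᵥ (M *ᵥ x) := by
  set U : Matrix n n ℝ := (hM.eigenvectorUnitary : Matrix n n ℝ) with hUdef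
  have hstar : star U = Uᵀ := by
    ext i j; simp [Matrix.star_apply]
  set y : n → ℝ := Uᵀ *ᵥ x with hydef
  have hU1 : U * Uᵀ = 1 := by
    rw [← hstar]; exact (Matrix.mem_unitaryGroup_iff).mp hM.eigenvectorUnitary.2
  have hvm : x ᵥ* U = y := by rw [hydef, ← vecMul_transpose, transpose_transpose]
  have hx : x ⬝ᵥ (M *ᵥ x) = ∑ i, hM.eigenvalues i * (y i)^2 := by
    conv_lhs => rw [hM.spectral_theorem, Unitary.conjStarAlgAut_apply, ← hUdef]
    rw [hstar, ← mulVec_mulVec, ← mulVec_mulVec, dotProduct_mulVec, hvm,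
      dotProduct_mulVec, ← hydef]
    simp only [vecMul_diagonal, dotProduct, Function.comp_apply]
    refine Finset.sum_congr rfl fun i _ => ?_
    simp [RCLike.ofReal]
    ring
  have hxx : x ⬝ᵥ x = y ⬝ᵥ y := by
    have h0 : x ⬝ᵥ x = x ⬝ᵥ ((U * Uᵀ) *ᵥ x) := by rw [hU1, one_mulVec]
    rw [h0, ← mulVec_mulVec, dotProduct_mulVec, hvm, ← hydef]
  rw [hx, hxx]
  have hbdd : BddBelow (Set.range hM.eigenvalues) := Finite.bddBelow_range _
  have h1 : lamMin hM * (y ⬝ᵥ y) = ∑ i, lamMin hM * (y i)^2 := by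
    rw [dotProduct, Finset.mul_sum]
    exact Finset.sum_congr rfl fun i _ => by ring
  rw [h1]
  refine Finset.sum_le_sum fun i _ => ?_
  exact mul_le_mul_of_nonneg_right (ciInf_le hbdd i) (sq_nonneg _)

lemma norm_sq_dot' {n : ℕ} (u : Fin n → ℝ) :
    ‖(WithLp.equiv 2 (Fin n → ℝ)).symm u‖ ^ 2 = u ⬝ᵥ u := by
  rw [EuclideanSpace.real_norm_sq_eq]
  simp [dotProduct, sq]

lemma dot_self_nonneg' {n : Type*} [Fintype n] (u : n → ℝ) : 0 ≤ u ⬝ᵥ u :=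
  Finset.sum_nonneg fun i _ => mul_self_nonneg (u i)

lemma dot_mulVec_le' {m n : ℕ} (P : Matrix (Fin m) (Fin n) ℝ) (u : Fin m → ℝ) (v : Fin n → ℝ) :
    |u ⬝ᵥ (P *ᵥ v)| ≤ (l2OpNorm P * Real.sqrt (v ⬝ᵥ v)) * Real.sqrt (u ⬝ᵥ u) := by
  set u' : EuclideanSpace ℝ (Fin m) := (WithLp.equiv 2 _).symm u with hu'
  set v' : EuclideanSpace ℝ (Fin n) := (WithLp.equiv 2 _).symm v with hv'
  have h1 : u ⬝ᵥ (P *ᵥ v) = inner ℝ u' (toEuclideanLin P v') := by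
    rw [toEuclideanLin_apply]
    simp [PiLp.inner_apply, dotProduct, RCLike.inner_apply, hu', hv']
    exact Finset.sum_congr rfl fun i _ => mul_comm _ _
  have h2 : |(inner ℝ u' (toEuclideanLin P v') : ℝ)| ≤ ‖u'‖ * ‖toEuclideanLin P v'‖ :=
    abs_real_inner_le_norm _ _
  have h3 : ‖toEuclideanLin P v'‖ ≤ l2OpNorm P * ‖v'‖ := by
    have := (LinearMap.toContinuousLinearMap (Matrix.toEuclideanLin P)).le_opNorm v'
    simpa [l2OpNorm] using this
  have hnu : ‖u'‖ = Real.sqrt (u ⬝ᵥ u) := by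
    rw [← norm_sq_dot' u, Real.sqrt_sq (norm_nonneg _)]
  have hnv : ‖v'‖ = Real.sqrt (v ⬝ᵥ v) := by
    rw [← norm_sq_dot' v, Real.sqrt_sq (norm_nonneg _)]
  rw [h1]
  calc |(inner ℝ u' (toEuclideanLin P v') : ℝ)| ≤ ‖u'‖ * ‖toEuclideanLin P v'‖ := h2
    _ ≤ ‖u'‖ * (l2OpNorm P * ‖v'‖) := mul_le_mul_of_nonneg_left h3 (norm_nonneg _)
    _ = (l2OpNorm P * Real.sqrt (v ⬝ᵥ v)) * Real.sqrt (u ⬝ᵥ u) := by rw [hnu, hnv]; ring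

set_option maxHeartbeats 1000000 in
lemma arith_main (a d p m q s t L : ℝ) (hp0 : 0 ≤ p) (hm0 : 0 < m) (hm2 : m^2 = (a-d)^2)
    (hq0 : 0 ≤ q) (hq2 : q^2 = m^2 + 4*p^2) (hs0 : 0 ≤ s) (ht0 : 0 ≤ t)
    (hst : s^2 + t^2 = 1)
    (hL : a*s^2 + d*t^2 - 2*(p*t*s) ≤ L) :
    min a d - p * Real.tan ((1/2) * Real.arctan (2*p/m)) ≤ L := by
  have hqm : 0 < q + m := by linarith
  have hy : Real.sqrt (1 + (2*p/m)^2) = q/m := by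
    rw [show 1 + (2*p/m)^2 = (q/m)^2 by field_simp; nlinarith [hq2]]
    exact Real.sqrt_sq (by positivity)
  have hδ : p * Real.tan ((1/2) * Real.arctan (2*p/m)) = 2*p^2/(q+m) := by
    rw [tan_half_arctan', hy]
    field_simp
  have hmin : min a d = (a + d - m)/2 := by
    have habs : m = |a - d| := by
      rcases abs_cases (a - d) with ⟨h1, _⟩ | ⟨h1, _⟩ <;> nlinarith [abs_nonneg (a-d)]
    rcases le_total a d with h | h
    · rw [min_eq_left h, habs, abs_of_nonpos (by linarith)]; ring
    · rw [min_eq_right h, habs, abs_of_nonneg (by linarith)]; ring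
  have hstepA : (a + d)/2 - q/2 ≤ a * s^2 + d * t^2 - 2 * (p * t * s) := by
    have hid : ((a - d)*(s^2 - t^2) - 4*p*s*t)^2 + (2*p*(s^2 - t^2) + 2*(a - d)*s*t)^2
        = ((a - d)^2 + 4*p^2) * (s^2 + t^2)^2 := by ring
    rw [hst] at hid
    have hXq : ((a - d)*(s^2 - t^2) - 4*p*s*t)^2 ≤ q^2 := by
      nlinarith [sq_nonneg (2*p*(s^2 - t^2) + 2*(a - d)*s*t), hid, hq2, hm2]
    have habsX : |(a - d)*(s^2 - t^2) - 4*p*s*t| ≤ q := by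
      rw [← Real.sqrt_sq_eq_abs, ← Real.sqrt_sq hq0]
      exact Real.sqrt_le_sqrt hXq
    have hX : -q ≤ (a - d)*(s^2 - t^2) - 4*p*s*t :=
      le_trans (by linarith [habsX]) (neg_abs_le _)
    have h2 : a * s^2 + d * t^2 - 2*(p*t*s) - ((a+d)/2 - q/2)
        = (((a - d)*(s^2 - t^2) - 4*p*s*t) + q)/2 := by
      linear_combination ((a+d)/2) * hst
    linarith [hX, h2]
  have hstepB : (a + d - m)/2 - 2*p^2/(q+m) = (a + d)/2 - q/2 := by
    have h : 2*p^2/(q+m) = (q - m)/2 := by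
      rw [div_eq_div_iff hqm.ne' (by norm_num : (2:ℝ) ≠ 0)]
      nlinarith [hq2]
    rw [h]; ring
  rw [hmin, hδ, hstepB]
  linarith

set_option maxHeartbeats 1000000 in
theorem stmt5 {d₁ d₂ : ℕ} (hd₁ : 0 < d₁) (hd₂ : 0 < d₂)
    (A : Matrix (Fin d₁) (Fin d₁) ℝ) (D : Matrix (Fin d₂) (Fin d₂) ℝ)
    (P : Matrix (Fin d₁) (Fin d₂) ℝ)
    (hA : A.IsHermitian) (hD : D.IsHermitian)
    (hJ : (Matrix.fromBlocks A P Pᵀ D).IsHermitian)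
    (hne : lamMin hA ≠ lamMin hD) :
    (∀ μ ∈ spectrum ℂ ((Matrix.fromBlocks A P Pᵀ D).map (algebraMap ℝ ℂ)), μ.im = 0) ∧
    min (lamMin hA) (lamMin hD) -
        l2OpNorm P * Real.tan
          ((1 / 2) * Real.arctan (2 * l2OpNorm P / |lamMin hA - lamMin hD|)) ≤ lamMin hJ ∧
    lamMin hJ ≤ min (lamMin hA) (lamMin hD) := by
  haveI : Nonempty (Fin d₁) := Fin.pos_iff_nonempty.mp hd₁
  haveI : Nonempty (Fin d₂) := Fin.pos_iff_nonempty.mp hd₂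
  set a := lamMin hA with hadef
  set d := lamMin hD with hddef
  set p := l2OpNorm P with hpdef
  have hp0 : 0 ≤ p := norm_nonneg _
  refine ⟨?_, ?_, ?_⟩
  · -- real spectrum
    intro μ hμ
    have hM' : ((Matrix.fromBlocks A P Pᵀ D).map (algebraMap ℝ ℂ)).IsHermitian := by
      ext i j
      have := congrFun (congrFun hJ i) j
      simp [Matrix.conjTranspose_apply, Matrix.map_apply] at this ⊢
      rw [← this]
    rw [← Matrix.spectrum_toEuclideanLin] at hμ
    have he := Module.End.hasEigenvalue_iff_mem_spectrum.mpr hμ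
    have := (Matrix.isHermitian_iff_isSymmetric.1 hM').conj_eigenvalue_eq_self he
    exact Complex.conj_eq_iff_im.mp this
  · -- lower bound
    obtain ⟨w, hw1, hw2⟩ := exists_min_eigvec hJ
    set u : Fin d₁ → ℝ := w ∘ Sum.inl with hudef
    set v : Fin d₂ → ℝ := w ∘ Sum.inr with hvdef
    have hw : w = Sum.elim u v := by funext i; cases i <;> rfl
    have hJw : w ⬝ᵥ ((Matrix.fromBlocks A P Pᵀ D) *ᵥ w) = lamMin hJ := by
      rw [hw2, dotProduct_smul, smul_eq_mul, hw1, mul_one]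
    have hexp : w ⬝ᵥ ((Matrix.fromBlocks A P Pᵀ D) *ᵥ w)
        = u ⬝ᵥ (A *ᵥ u) + v ⬝ᵥ (D *ᵥ v) + 2 * (u ⬝ᵥ (P *ᵥ v)) := by
      rw [hw, fromBlocks_mulVec, sumElim_dotProduct_sumElim, Sum.elim_comp_inl,
        Sum.elim_comp_inr, dotProduct_add, dotProduct_add]
      have h : v ⬝ᵥ (Pᵀ *ᵥ u) = u ⬝ᵥ (P *ᵥ v) := by
        rw [dotProduct_mulVec, vecMul_transpose, dotProduct_comm]
      rw [h]; ring
    have hsum1 : u ⬝ᵥ u + v ⬝ᵥ v = 1 := by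
      rw [hw, sumElim_dotProduct_sumElim] at hw1; exact hw1
    set s := Real.sqrt (u ⬝ᵥ u) with hsdef
    set t := Real.sqrt (v ⬝ᵥ v) with htdef
    have hs0 : 0 ≤ s := Real.sqrt_nonneg _
    have ht0 : 0 ≤ t := Real.sqrt_nonneg _
    have hs2 : s^2 = u ⬝ᵥ u := Real.sq_sqrt (dot_self_nonneg' u)
    have ht2 : t^2 = v ⬝ᵥ v := Real.sq_sqrt (dot_self_nonneg' v)
    have hst : s^2 + t^2 = 1 := by rw [hs2, ht2]; exact hsum1
    have hra : a * s^2 ≤ u ⬝ᵥ (A *ᵥ u) := by rw [hs2]; exact lamMin_rayleigh_le hA u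
    have hrd : d * t^2 ≤ v ⬝ᵥ (D *ᵥ v) := by rw [ht2]; exact lamMin_rayleigh_le hD v
    have hcross : -(p * t * s) ≤ u ⬝ᵥ (P *ᵥ v) := by
      have := dot_mulVec_le' P u v
      rw [← hsdef, ← htdef] at this
      have h1 := neg_abs_le (u ⬝ᵥ (P *ᵥ v))
      nlinarith [this, h1]
    have hlow : a * s^2 + d * t^2 - 2 * (p * t * s) ≤ lamMin hJ := by
      rw [← hJw, hexp]; linarith
    have hm0 : 0 < |a - d| := abs_pos.mpr (sub_ne_zero.mpr hne)
    have hm2 : |a - d|^2 = (a - d)^2 := sq_abs _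
    have hq0 : 0 ≤ Real.sqrt (|a - d|^2 + 4*p^2) := Real.sqrt_nonneg _
    have hq2 : Real.sqrt (|a - d|^2 + 4*p^2)^2 = |a - d|^2 + 4*p^2 :=
      Real.sq_sqrt (by positivity)
    exact arith_main a d p (|a - d|) (Real.sqrt (|a - d|^2 + 4*p^2)) s t (lamMin hJ)
      hp0 hm0 hm2 hq0 hq2 hs0 ht0 hst hlow
  · -- upper bound
    have h1 : lamMin hJ ≤ a := by
      obtain ⟨u, hu1, hu2⟩ := exists_min_eigvec hA
      have h := lamMin_rayleigh_le hJ (Sum.elim u 0)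
      rw [fromBlocks_mulVec, sumElim_dotProduct_sumElim, sumElim_dotProduct_sumElim] at h
      simp only [Sum.elim_comp_inl, Sum.elim_comp_inr, mulVec_zero, add_zero, dotProduct_zero,
        zero_dotProduct, hu1, mul_one, hu2, dotProduct_smul, smul_eq_mul] at h
      exact h
    have h2 : lamMin hJ ≤ d := by
      obtain ⟨v, hv1, hv2⟩ := exists_min_eigvec hD
      have h := lamMin_rayleigh_le hJ (Sum.elim 0 v)
      rw [fromBlocks_mulVec, sumElim_dotProduct_sumElim, sumElim_dotProduct_sumElim] at h
      simp only [Sum.elim_comp_inl, Sum.elim_comp_inr, mulVec_zero, zero_add, add_zero,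
        dotProduct_zero, zero_dotProduct, hv1, mul_one, hv2, dotProduct_smul, smul_eq_mul] at h
      exact h
    exact le_min h1 h2
end

section
/- Let d₁, d₂ be positive integers, A a d₁×d₁ real symmetric matrix, D a d₂×d₂ real symmetric matrix, and P a d₁×d₂ real matrix, and let J = [[A, P], [Pᵀ, D]]. If λmax(D) < λmin(A), then J has no eigenvalue in the open interval (λmax(D), λmin(A)). Symmetrically, if λmax(A) < λmin(D), then J has no eigenvalue in the open interval (λmax(A), λmin(D)). -/
open Matrix


section aux
variable {n : Type*} [Fintype n] [DecidableEq n] {A : Matrix n n ℝ} {c : ℝ}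

lemma quad_ge_s7 (hA : A.IsHermitian) (hc : ∀ i, c ≤ hA.eigenvalues i) (x : n → ℝ) :
    c * (x ⬝ᵥ x) ≤ x ⬝ᵥ (A *ᵥ x) := by
  have hps : (A - c • 1).PosSemidef := by
    have : A - c • (1 : Matrix n n ℝ) =
        (hA.eigenvectorUnitary : Matrix n n ℝ) * diagonal (fun i => hA.eigenvalues i - c)
          * star (hA.eigenvectorUnitary : Matrix n n ℝ) := by
      have hU : (hA.eigenvectorUnitary : Matrix n n ℝ) *
          star (hA.eigenvectorUnitary : Matrix n n ℝ) = 1 :=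
        Matrix.mem_unitaryGroup_iff.mp hA.eigenvectorUnitary.2
      have hd : diagonal (fun i => hA.eigenvalues i - c) =
          diagonal (RCLike.ofReal ∘ hA.eigenvalues) - c • (1 : Matrix n n ℝ) := by
        rw [← Matrix.diagonal_one, ← Matrix.diagonal_smul, ← Matrix.diagonal_sub]
        ext i j
        by_cases h : i = j <;> simp [h, Matrix.diagonal_apply]
      rw [hd, Matrix.mul_sub, Matrix.sub_mul,
        ← Unitary.conjStarAlgAut_apply (S := ℝ) (x := diagonal (RCLike.ofReal ∘ hA.eigenvalues)),
        ← hA.spectral_theorem]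
      congr 1
      rw [Matrix.mul_smul, Matrix.smul_mul, Matrix.mul_one, hU]
    rw [this]
    rw [Matrix.star_eq_conjTranspose]
    exact (Matrix.posSemidef_diagonal_iff.mpr fun i => sub_nonneg.mpr (hc i)
      ).mul_mul_conjTranspose_same _
  have := hps.re_dotProduct_nonneg x
  simp only [RCLike.re_to_real, star_trivial, Matrix.sub_mulVec, Matrix.smul_mulVec,
    Matrix.one_mulVec, dotProduct_sub, dotProduct_smul, smul_eq_mul] at this
  linarith

lemma quad_le_s7 (hA : A.IsHermitian) (hc : ∀ i, hA.eigenvalues i ≤ c) (x : n → ℝ) :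
    x ⬝ᵥ (A *ᵥ x) ≤ c * (x ⬝ᵥ x) := by
  have hps : (c • 1 - A).PosSemidef := by
    have : c • (1 : Matrix n n ℝ) - A =
        (hA.eigenvectorUnitary : Matrix n n ℝ) * diagonal (fun i => c - hA.eigenvalues i)
          * star (hA.eigenvectorUnitary : Matrix n n ℝ) := by
      have hU : (hA.eigenvectorUnitary : Matrix n n ℝ) *
          star (hA.eigenvectorUnitary : Matrix n n ℝ) = 1 :=
        Matrix.mem_unitaryGroup_iff.mp hA.eigenvectorUnitary.2
      have hd : diagonal (fun i => c - hA.eigenvalues i) =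
          c • (1 : Matrix n n ℝ) - diagonal (RCLike.ofReal ∘ hA.eigenvalues) := by
        ext i j
        by_cases h : i = j <;> simp [h, Matrix.diagonal_apply]
      rw [hd, Matrix.mul_sub, Matrix.sub_mul,
        ← Unitary.conjStarAlgAut_apply (S := ℝ) (x := diagonal (RCLike.ofReal ∘ hA.eigenvalues)),
        ← hA.spectral_theorem]
      congr 1
      rw [Matrix.mul_smul, Matrix.smul_mul, Matrix.mul_one, hU]
    rw [this, Matrix.star_eq_conjTranspose]
    exact (Matrix.posSemidef_diagonal_iff.mpr fun i => sub_nonneg.mpr (hc i)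
      ).mul_mul_conjTranspose_same _
  have := hps.re_dotProduct_nonneg x
  simp only [RCLike.re_to_real, star_trivial, Matrix.sub_mulVec, Matrix.smul_mulVec,
    Matrix.one_mulVec, dotProduct_sub, dotProduct_smul, smul_eq_mul] at this
  linarith

lemma dp_self_nonneg {n : Type*} [Fintype n] (v : n → ℝ) : 0 ≤ v ⬝ᵥ v :=
  Finset.sum_nonneg fun i _ => mul_self_nonneg _

lemma spec_to_vec {n : Type*} [Fintype n] [DecidableEq n] {M : Matrix n n ℝ} {μ : ℝ}
    (h : (μ : ℂ) ∈ spectrum ℂ (M.map (algebraMap ℝ ℂ))) :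
    ∃ v : n → ℝ, v ≠ 0 ∧ M *ᵥ v = μ • v := by
  rw [spectrum.mem_iff] at h
  have hdet : (μ • (1 : Matrix n n ℝ) - M).det = 0 := by
    by_contra hne
    apply h
    have hmap : algebraMap ℂ (Matrix n n ℂ) (μ : ℂ) - M.map (algebraMap ℝ ℂ)
        = (μ • (1 : Matrix n n ℝ) - M).map (algebraMap ℝ ℂ) := by
      ext i j
      by_cases hij : i = j <;>
        simp [hij, Matrix.map_apply, Matrix.algebraMap_matrix_apply, Matrix.one_apply]
    rw [hmap, Matrix.isUnit_iff_isUnit_det,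
      show ((μ • (1 : Matrix n n ℝ) - M).map (algebraMap ℝ ℂ)) =
        (algebraMap ℝ ℂ).mapMatrix (μ • (1 : Matrix n n ℝ) - M) from rfl,
      ← RingHom.map_det]
    simp [hne, isUnit_iff_ne_zero]
  obtain ⟨v, hv0, hv⟩ := (Matrix.exists_mulVec_eq_zero_iff).mpr hdet
  refine ⟨v, hv0, ?_⟩
  have := hv
  rw [Matrix.sub_mulVec, Matrix.smul_mulVec, Matrix.one_mulVec, sub_eq_zero] at this
  exact this.symm
end aux



theorem stmt7 {d₁ d₂ : ℕ} (hd₁ : 0 < d₁) (hd₂ : 0 < d₂)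
    (A : Matrix (Fin d₁) (Fin d₁) ℝ) (D : Matrix (Fin d₂) (Fin d₂) ℝ)
    (P : Matrix (Fin d₁) (Fin d₂) ℝ)
    (hA : A.IsHermitian) (hD : D.IsHermitian) :
    (lamMax hD < lamMin hA →
      ∀ μ : ℝ, (μ : ℂ) ∈ spectrum ℂ ((Matrix.fromBlocks A P Pᵀ D).map (algebraMap ℝ ℂ)) →
        μ ∉ Set.Ioo (lamMax hD) (lamMin hA)) ∧
    (lamMax hA < lamMin hD →
      ∀ μ : ℝ, (μ : ℂ) ∈ spectrum ℂ ((Matrix.fromBlocks A P Pᵀ D).map (algebraMap ℝ ℂ)) →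
        μ ∉ Set.Ioo (lamMax hA) (lamMin hD)) := by
  have hne₁ : Nonempty (Fin d₁) := ⟨⟨0, hd₁⟩⟩
  have hne₂ : Nonempty (Fin d₂) := ⟨⟨0, hd₂⟩⟩
  have hAmin : ∀ x : Fin d₁ → ℝ, lamMin hA * (x ⬝ᵥ x) ≤ x ⬝ᵥ (A *ᵥ x) := fun x =>
    quad_ge_s7 hA (fun i => ciInf_le (Finite.bddBelow_range _) i) x
  have hAmax : ∀ x : Fin d₁ → ℝ, x ⬝ᵥ (A *ᵥ x) ≤ lamMax hA * (x ⬝ᵥ x) := fun x =>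
    quad_le_s7 hA (fun i => le_ciSup (Finite.bddAbove_range _) i) x
  have hDmin : ∀ y : Fin d₂ → ℝ, lamMin hD * (y ⬝ᵥ y) ≤ y ⬝ᵥ (D *ᵥ y) := fun y =>
    quad_ge_s7 hD (fun i => ciInf_le (Finite.bddBelow_range _) i) y
  have hDmax : ∀ y : Fin d₂ → ℝ, y ⬝ᵥ (D *ᵥ y) ≤ lamMax hD * (y ⬝ᵥ y) := fun y =>
    quad_le_s7 hD (fun i => le_ciSup (Finite.bddAbove_range _) i) y
  have key : ∀ μ : ℝ,
      (μ : ℂ) ∈ spectrum ℂ ((Matrix.fromBlocks A P Pᵀ D).map (algebraMap ℝ ℂ)) →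
      ∃ x : Fin d₁ → ℝ, ∃ y : Fin d₂ → ℝ, ¬(x = 0 ∧ y = 0) ∧
        x ⬝ᵥ (A *ᵥ x) - μ * (x ⬝ᵥ x) + (μ * (y ⬝ᵥ y) - y ⬝ᵥ (D *ᵥ y)) = 0 := by
    intro μ hμ
    obtain ⟨v, hv0, hv⟩ := spec_to_vec hμ
    set x : Fin d₁ → ℝ := v ∘ Sum.inl with hx
    set y : Fin d₂ → ℝ := v ∘ Sum.inr with hy
    refine ⟨x, y, ?_, ?_⟩
    · rintro ⟨hx0, hy0⟩
      apply hv0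
      funext i
      cases i with
      | inl a => exact congrFun hx0 a
      | inr a => exact congrFun hy0 a
    · rw [Matrix.fromBlocks_mulVec] at hv
      have eq1 : A *ᵥ x + P *ᵥ y = μ • x := funext fun i => congrFun hv (Sum.inl i)
      have eq2 : Pᵀ *ᵥ x + D *ᵥ y = μ • y := funext fun i => congrFun hv (Sum.inr i)
      have d1 : x ⬝ᵥ (A *ᵥ x) + x ⬝ᵥ (P *ᵥ y) = μ * (x ⬝ᵥ x) := by
        have := congrArg (fun w => x ⬝ᵥ w) eq1
        simpa [dotProduct_add, dotProduct_smul] using this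
      have d2 : y ⬝ᵥ (Pᵀ *ᵥ x) + y ⬝ᵥ (D *ᵥ y) = μ * (y ⬝ᵥ y) := by
        have := congrArg (fun w => y ⬝ᵥ w) eq2
        simpa [dotProduct_add, dotProduct_smul] using this
      have cross : x ⬝ᵥ (P *ᵥ y) = y ⬝ᵥ (Pᵀ *ᵥ x) := by
        rw [Matrix.dotProduct_mulVec, ← Matrix.mulVec_transpose, dotProduct_comm]
      linarith
  constructor
  · rintro hlt μ hμ ⟨h1, h2⟩
    obtain ⟨x, y, hne, hid⟩ := key μ hμ
    have b1 := hAmin x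
    have b2 := hDmax y
    have hx0 : x ⬝ᵥ x = 0 := by nlinarith [dp_self_nonneg x, dp_self_nonneg y]
    have hy0 : y ⬝ᵥ y = 0 := by nlinarith [dp_self_nonneg x, dp_self_nonneg y]
    exact hne ⟨dotProduct_self_eq_zero.mp hx0, dotProduct_self_eq_zero.mp hy0⟩
  · rintro hlt μ hμ ⟨h1, h2⟩
    obtain ⟨x, y, hne, hid⟩ := key μ hμ
    have b1 := hAmax x
    have b2 := hDmin y
    have hx0 : x ⬝ᵥ x = 0 := by nlinarith [dp_self_nonneg x, dp_self_nonneg y]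
    have hy0 : y ⬝ᵥ y = 0 := by nlinarith [dp_self_nonneg x, dp_self_nonneg y]
    exact hne ⟨dotProduct_self_eq_zero.mp hx0, dotProduct_self_eq_zero.mp hy0⟩
end

section
/- Let d₁, d₂ be positive integers, A a d₁×d₁ real symmetric negative definite matrix, D a d₂×d₂ real symmetric negative definite matrix, and Z an arbitrary d₁×d₂ real matrix. Then for every real τ > 0, the block matrix [[A, Z], [−τ·Zᵀ, τ·D]] is Hurwitz: every eigenvalue has strictly negative real part. -/
open Matrix

private lemma sum_mul_sum_swap {n m : Type*} [Fintype n] [Fintype m]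
    (Z : Matrix n m ℝ) (x : n → ℝ) (y : m → ℝ) (c : ℝ) :
    ∑ b, y b * ∑ a, c * Z a b * x a = c * ∑ a, ∑ b, Z a b * x a * y b := by
  calc ∑ b, y b * ∑ a, c * Z a b * x a
      = ∑ b, ∑ a, c * (Z a b * x a * y b) := by
        refine Finset.sum_congr rfl fun b _ => ?_
        rw [Finset.mul_sum]
        exact Finset.sum_congr rfl fun a _ => by ring
    _ = ∑ a, ∑ b, c * (Z a b * x a * y b) := Finset.sum_comm
    _ = c * ∑ a, ∑ b, Z a b * x a * y b := by
        rw [Finset.mul_sum]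
        exact Finset.sum_congr rfl fun a _ => by rw [Finset.mul_sum]

private lemma sum_mul_sum_const {n : Type*} [Fintype n]
    (M : Matrix n n ℝ) (x : n → ℝ) (c : ℝ) :
    ∑ a, x a * ∑ b, c * M a b * x b = c * ∑ a, x a * ∑ b, M a b * x b := by
  rw [Finset.mul_sum]
  refine Finset.sum_congr rfl fun a _ => ?_
  rw [Finset.mul_sum, Finset.mul_sum, Finset.mul_sum]
  exact Finset.sum_congr rfl fun b _ => by ring

private lemma quad_neg {n : Type*} [Fintype n] {A : Matrix n n ℝ} (hA : (-A).PosDef) :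
    (∀ u : n → ℝ, (∑ a, u a * ∑ b, A a b * u b) ≤ 0) ∧
    (∀ u : n → ℝ, u ≠ 0 → (∑ a, u a * ∑ b, A a b * u b) < 0) := by
  have key : ∀ u : n → ℝ, dotProduct (star u) ((-A) *ᵥ u)
      = -(∑ a, u a * ∑ b, A a b * u b) := by
    intro u
    simp [Matrix.neg_mulVec, dotProduct, Matrix.mulVec, Finset.mul_sum, star]
  constructor
  · intro u
    have h := hA.posSemidef.dotProduct_mulVec_nonneg u
    rw [key] at h
    linarith
  · intro u hu
    have h := hA.dotProduct_mulVec_pos hu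
    rw [key] at h
    linarith

set_option maxHeartbeats 2000000 in
theorem stmt9 {d₁ d₂ : ℕ} (hd₁ : 0 < d₁) (hd₂ : 0 < d₂)
    (A : Matrix (Fin d₁) (Fin d₁) ℝ) (D : Matrix (Fin d₂) (Fin d₂) ℝ)
    (Z : Matrix (Fin d₁) (Fin d₂) ℝ)
    (hA : (-A).PosDef) (hD : (-D).PosDef)
    (τ : ℝ) (hτ : 0 < τ) :
    ∀ μ ∈ spectrum ℂ ((Matrix.fromBlocks A Z (-(τ • Zᵀ)) (τ • D)).map (algebraMap ℝ ℂ)),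
      μ.re < 0 := by
  intro μ hμ
  set M := (Matrix.fromBlocks A Z (-(τ • Zᵀ)) (τ • D)).map (algebraMap ℝ ℂ) with hMdef
  rw [← AlgEquiv.spectrum_eq (Matrix.toLinAlgEquiv' (n := Fin d₁ ⊕ Fin d₂) (R := ℂ)) M] at hμ
  have hev : Module.End.HasEigenvalue (Matrix.toLinAlgEquiv' M) μ :=
    Module.End.hasEigenvalue_iff_mem_spectrum.mpr hμ
  obtain ⟨v, hv⟩ := hev.exists_hasEigenvector
  have hmv : M.mulVec v = μ • v := by
    have := hv.apply_eq_smul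
    simpa [Matrix.toLinAlgEquiv'_apply] using this
  have key : ∀ i, ∑ j, M i j * v j = μ * v i := by
    intro i
    have := congrFun hmv i
    simpa [Matrix.mulVec, dotProduct] using this
  set xr : Fin d₁ → ℝ := fun a => (v (Sum.inl a)).re with hxr
  set xi : Fin d₁ → ℝ := fun a => (v (Sum.inl a)).im with hxi
  set yr : Fin d₂ → ℝ := fun b => (v (Sum.inr b)).re with hyr
  set yi : Fin d₂ → ℝ := fun b => (v (Sum.inr b)).im with hyi
  have ha_re : ∀ a : Fin d₁, (∑ b, A a b * xr b) + (∑ b, Z a b * yr b)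
      = μ.re * xr a - μ.im * xi a := by
    intro a
    have h := congrArg Complex.re (key (Sum.inl a))
    simpa [hMdef, Fintype.sum_sum_type, Complex.re_sum, Complex.mul_re, Complex.mul_im,
      Matrix.map_apply, hxr, hxi, hyr, hyi] using h
  have ha_im : ∀ a : Fin d₁, (∑ b, A a b * xi b) + (∑ b, Z a b * yi b)
      = μ.re * xi a + μ.im * xr a := by
    intro a
    have h := congrArg Complex.im (key (Sum.inl a))
    simpa [hMdef, Fintype.sum_sum_type, Complex.im_sum, Complex.mul_re, Complex.mul_im,
      Matrix.map_apply, hxr, hxi, hyr, hyi] using h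
  have hd_re : ∀ b : Fin d₂, -∑ a, τ * Z a b * xr a + ∑ c, τ * D b c * yr c
      = μ.re * yr b - μ.im * yi b := by
    intro b
    have h := congrArg Complex.re (key (Sum.inr b))
    simpa [hMdef, Fintype.sum_sum_type, Complex.re_sum, Complex.mul_re, Complex.mul_im,
      Matrix.map_apply, hxr, hxi, hyr, hyi] using h
  have hd_im : ∀ b : Fin d₂, -∑ a, τ * Z a b * xi a + ∑ c, τ * D b c * yi c
      = μ.re * yi b + μ.im * yr b := by
    intro b
    have h := congrArg Complex.im (key (Sum.inr b))
    simpa [hMdef, Fintype.sum_sum_type, Complex.im_sum, Complex.mul_re, Complex.mul_im,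
      Matrix.map_apply, hxr, hxi, hyr, hyi] using h
  set Qxr : ℝ := ∑ a, xr a * ∑ b, A a b * xr b with hQxr
  set Qxi : ℝ := ∑ a, xi a * ∑ b, A a b * xi b with hQxi
  set Qyr : ℝ := ∑ b, yr b * ∑ c, D b c * yr c with hQyr
  set Qyi : ℝ := ∑ b, yi b * ∑ c, D b c * yi c with hQyi
  set Cr : ℝ := ∑ a, ∑ b, Z a b * xr a * yr b with hCr
  set Ci : ℝ := ∑ a, ∑ b, Z a b * xi a * yi b with hCi
  set P1 : ℝ := ∑ a, xr a * xr a with hP1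
  set P2 : ℝ := ∑ a, xr a * xi a with hP2
  set P3 : ℝ := ∑ a, xi a * xi a with hP3
  set R1 : ℝ := ∑ b, yr b * yr b with hR1
  set R2 : ℝ := ∑ b, yr b * yi b with hR2
  set R3 : ℝ := ∑ b, yi b * yi b with hR3
  have E1 : Qxr + Cr = μ.re * P1 - μ.im * P2 := by
    have h : ∑ a, xr a * ((∑ b, A a b * xr b) + (∑ b, Z a b * yr b))
        = ∑ a, xr a * (μ.re * xr a - μ.im * xi a) :=
      Finset.sum_congr rfl fun a _ => by rw [ha_re a]
    calc Qxr + Cr = ∑ a, xr a * ((∑ b, A a b * xr b) + (∑ b, Z a b * yr b)) := by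
          rw [hQxr, hCr, ← Finset.sum_add_distrib]
          refine Finset.sum_congr rfl fun a _ => ?_
          have hz : ∑ b, Z a b * xr a * yr b = xr a * ∑ b, Z a b * yr b := by
            rw [Finset.mul_sum]
            exact Finset.sum_congr rfl fun b _ => by ring
          rw [mul_add, hz]
      _ = ∑ a, xr a * (μ.re * xr a - μ.im * xi a) := h
      _ = μ.re * P1 - μ.im * P2 := by
          rw [hP1, hP2, Finset.mul_sum, Finset.mul_sum, ← Finset.sum_sub_distrib]
          exact Finset.sum_congr rfl fun a _ => by ring
  have E2 : Qxi + Ci = μ.re * P3 + μ.im * P2 := by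
    have h : ∑ a, xi a * ((∑ b, A a b * xi b) + (∑ b, Z a b * yi b))
        = ∑ a, xi a * (μ.re * xi a + μ.im * xr a) :=
      Finset.sum_congr rfl fun a _ => by rw [ha_im a]
    calc Qxi + Ci = ∑ a, xi a * ((∑ b, A a b * xi b) + (∑ b, Z a b * yi b)) := by
          rw [hQxi, hCi, ← Finset.sum_add_distrib]
          refine Finset.sum_congr rfl fun a _ => ?_
          have hz : ∑ b, Z a b * xi a * yi b = xi a * ∑ b, Z a b * yi b := by
            rw [Finset.mul_sum]
            exact Finset.sum_congr rfl fun b _ => by ring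
          rw [mul_add, hz]
      _ = ∑ a, xi a * (μ.re * xi a + μ.im * xr a) := h
      _ = μ.re * P3 + μ.im * P2 := by
          rw [hP3, hP2, Finset.mul_sum, Finset.mul_sum, ← Finset.sum_add_distrib]
          exact Finset.sum_congr rfl fun a _ => by ring
  have E3 : -(τ * Cr) + τ * Qyr = μ.re * R1 - μ.im * R2 := by
    have h : ∑ b, yr b * (-∑ a, τ * Z a b * xr a + ∑ c, τ * D b c * yr c)
        = ∑ b, yr b * (μ.re * yr b - μ.im * yi b) :=
      Finset.sum_congr rfl fun b _ => by rw [hd_re b]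
    calc -(τ * Cr) + τ * Qyr
        = ∑ b, yr b * (-∑ a, τ * Z a b * xr a + ∑ c, τ * D b c * yr c) := by
          have h1 := sum_mul_sum_swap Z xr yr τ
          have h2 := sum_mul_sum_const D yr τ
          rw [hCr, hQyr, ← h1, ← h2]
          rw [← Finset.sum_neg_distrib, ← Finset.sum_add_distrib]
          exact Finset.sum_congr rfl fun b _ => by ring
      _ = ∑ b, yr b * (μ.re * yr b - μ.im * yi b) := h
      _ = μ.re * R1 - μ.im * R2 := by
          rw [hR1, hR2, Finset.mul_sum, Finset.mul_sum, ← Finset.sum_sub_distrib]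
          exact Finset.sum_congr rfl fun b _ => by ring
  have E4 : -(τ * Ci) + τ * Qyi = μ.re * R3 + μ.im * R2 := by
    have h : ∑ b, yi b * (-∑ a, τ * Z a b * xi a + ∑ c, τ * D b c * yi c)
        = ∑ b, yi b * (μ.re * yi b + μ.im * yr b) :=
      Finset.sum_congr rfl fun b _ => by rw [hd_im b]
    calc -(τ * Ci) + τ * Qyi
        = ∑ b, yi b * (-∑ a, τ * Z a b * xi a + ∑ c, τ * D b c * yi c) := by
          have h1 := sum_mul_sum_swap Z xi yi τ
          have h2 := sum_mul_sum_const D yi τ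
          rw [hCi, hQyi, ← h1, ← h2]
          rw [← Finset.sum_neg_distrib, ← Finset.sum_add_distrib]
          exact Finset.sum_congr rfl fun b _ => by ring
      _ = ∑ b, yi b * (μ.re * yi b + μ.im * yr b) := h
      _ = μ.re * R3 + μ.im * R2 := by
          rw [hR3, hR2, Finset.mul_sum, Finset.mul_sum, ← Finset.sum_add_distrib]
          exact Finset.sum_congr rfl fun b _ => by ring
  have main : μ.re * (τ * (P1 + P3) + (R1 + R3)) = τ * (Qxr + Qxi + Qyr + Qyi) := by
    linear_combination -τ * E1 - τ * E2 - E3 - E4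
  -- sign facts
  obtain ⟨hAle, hAlt⟩ := quad_neg hA
  obtain ⟨hDle, hDlt⟩ := quad_neg hD
  have hQxr_le : Qxr ≤ 0 := hAle xr
  have hQxi_le : Qxi ≤ 0 := hAle xi
  have hQyr_le : Qyr ≤ 0 := hDle yr
  have hQyi_le : Qyi ≤ 0 := hDle yi
  have hP1_nn : 0 ≤ P1 := Finset.sum_nonneg fun a _ => mul_self_nonneg _
  have hP3_nn : 0 ≤ P3 := Finset.sum_nonneg fun a _ => mul_self_nonneg _
  have hR1_nn : 0 ≤ R1 := Finset.sum_nonneg fun b _ => mul_self_nonneg _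
  have hR3_nn : 0 ≤ R3 := Finset.sum_nonneg fun b _ => mul_self_nonneg _
  -- some component is nonzero
  obtain ⟨i, hi⟩ := Function.ne_iff.mp hv.2
  have posP : ∀ {n : ℕ} (u : Fin n → ℝ) (a : Fin n), u a ≠ 0 → 0 < ∑ c, u c * u c := by
    intro n u a ha
    have h1 : 0 < u a * u a := mul_self_pos.mpr ha
    have h2 : u a * u a ≤ ∑ c, u c * u c :=
      Finset.single_le_sum (fun c _ => mul_self_nonneg (u c)) (Finset.mem_univ a)
    linarith
  have hQN : (Qxr + Qxi + Qyr + Qyi) < 0 ∧ 0 < τ * (P1 + P3) + (R1 + R3) := by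
    rcases i with a | b
    · have hne : xr a ≠ 0 ∨ xi a ≠ 0 := by
        by_contra h
        push_neg at h
        refine hi (Complex.ext ?_ ?_)
        · simpa [hxr] using h.1
        · simpa [hxi] using h.2
      rcases hne with h0 | h0
      · have hune : xr ≠ 0 := fun h => h0 (by simp [h])
        have hq := hAlt xr hune
        have hp := posP xr a h0
        rw [← hP1] at hp
        exact ⟨by linarith, by nlinarith [mul_pos hτ hp, mul_nonneg hτ.le hP3_nn]⟩
      · have hune : xi ≠ 0 := fun h => h0 (by simp [h])
        have hq := hAlt xi hune
        have hp := posP xi a h0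
        rw [← hP3] at hp
        exact ⟨by linarith, by nlinarith [mul_pos hτ hp, mul_nonneg hτ.le hP1_nn]⟩
    · have hne : yr b ≠ 0 ∨ yi b ≠ 0 := by
        by_contra h
        push_neg at h
        refine hi (Complex.ext ?_ ?_)
        · simpa [hyr] using h.1
        · simpa [hyi] using h.2
      rcases hne with h0 | h0
      · have hune : yr ≠ 0 := fun h => h0 (by simp [h])
        have hq := hDlt yr hune
        have hp := posP yr b h0
        rw [← hR1] at hp
        refine ⟨by linarith, ?_⟩
        have : 0 ≤ τ * (P1 + P3) := mul_nonneg hτ.le (by linarith)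
        linarith
      · have hune : yi ≠ 0 := fun h => h0 (by simp [h])
        have hq := hDlt yi hune
        have hp := posP yi b h0
        rw [← hR3] at hp
        refine ⟨by linarith, ?_⟩
        have : 0 ≤ τ * (P1 + P3) := mul_nonneg hτ.le (by linarith)
        linarith
  have hprod : μ.re * (τ * (P1 + P3) + (R1 + R3)) < 0 := by
    rw [main]
    exact mul_neg_of_pos_of_neg hτ hQN.1
  by_contra hc
  push_neg at hc
  nlinarith [hQN.2, hprod]
end
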